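/- arXiv:1708.07657 — 3 statements merged into one kernel-verified Lean document; each statement's English description precedes it below -/
import Mathlib

section
/- There exists a positive integer c, depending only on C1, C2, s0, ε0, r, q and m, such that for every k ≥ k0, every n ≥ c·φ_k, every n-optimal set α_n ∈ C_{n,r}(μ) and every Voronoi partition (P_a(α_n))_{a∈α_n}: if σ ∈ Ω_k, a ∈ α_n and P_a(α_n) ∩ A_σ ≠ ∅, then d(a, c_σ) ≤ (13/2)·m^{-k}. -/
open MeasureTheory Metric Set

noncomputable section

variable {E : Type*} [NormedAddCommGroup E] [NormedSpace ℝ E]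
  [MeasurableSpace E] [BorelSpace E]

/-- The (topological) support of a Borel measure: the set of points all of whose
neighborhoods have positive measure. -/
def msupp (μ : Measure E) : Set E := {x | ∀ ε : ℝ, 0 < ε → 0 < μ (ball x ε)}

/-- The set of achievable quantization integrals `∫ d(x,α)^r dν` over sets `α` with
`1 ≤ card α ≤ n`. -/
def quantSet (ν : Measure E) (r : ℝ) (n : ℕ) : Set ℝ :=
  {I | ∃ α : Finset E, α.Nonempty ∧ α.card ≤ n ∧ I = ∫ x, infDist x (α : Set E) ^ r ∂ν}

/-- The `n`-th quantization error of order `r`, raised to the power `r`: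
`e_{n,r}(ν)^r = inf { ∫ d(x,α)^r dν : 1 ≤ card α ≤ n }`. -/
def quantErrPow (ν : Measure E) (r : ℝ) (n : ℕ) : ℝ := sInf (quantSet ν r n)

/-- `α` is an `n`-optimal set for `ν` of order `r`. -/
def IsOptimalSet (ν : Measure E) (r : ℝ) (n : ℕ) (α : Finset E) : Prop :=
  α.Nonempty ∧ α.card ≤ n ∧ (∫ x, infDist x (α : Set E) ^ r ∂ν) = quantErrPow ν r n

/-- `P` is a Voronoi partition (into Borel sets) with respect to the finite set `α`. -/
def IsVoronoiPartition (α : Finset E) (P : E → Set E) : Prop :=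
  (∀ a ∈ α, MeasurableSet (P a)) ∧
  ((⋃ a ∈ α, P a) = univ) ∧
  (∀ a ∈ α, ∀ b ∈ α, a ≠ b → Disjoint (P a) (P b)) ∧
  (∀ a ∈ α, {x | dist x a < infDist x ((α : Set E) \ {a})} ⊆ P a) ∧
  (∀ a ∈ α, P a ⊆ {x | dist x a = infDist x (α : Set E)})

/-- `I_a(α,ν) = ∫_{P_a(α)} d(x,α)^r dν`. -/
def voronoiI (ν : Measure E) (r : ℝ) (α : Finset E) (P : E → Set E) (a : E) : ℝ :=
  ∫ x in P a, infDist x (α : Set E) ^ r ∂ν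

/-- `μ` is `s0`-dimensional Ahlfors–David regular with constants `ε0, C1, C2`, together
with the global upper bound (valid for all centers and radii). -/
def IsAhlfors (μ : Measure E) (s0 ε0 C1 C2 : ℝ) : Prop :=
  0 < s0 ∧ 0 < ε0 ∧ 0 < C1 ∧ 0 < C2 ∧
  (∀ x ∈ msupp μ, ∀ ε : ℝ, 0 < ε → ε < ε0 →
    ENNReal.ofReal (C1 * ε ^ s0) ≤ μ (closedBall x ε) ∧
    μ (closedBall x ε) ≤ ENNReal.ofReal (C2 * ε ^ s0)) ∧
  (∀ x : E, ∀ ε : ℝ, 0 < ε → μ (closedBall x ε) ≤ ENNReal.ofReal (C2 * ε ^ s0))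

/-- `h` is a similitude of ratio `ρ`. -/
def IsSimilitude (h : E → E) (ρ : ℝ) : Prop :=
  Function.Surjective h ∧ ∀ x y, dist (h x) (h y) = ρ * dist x y

/-- The measure `λ_B = μ(·|B) ∘ h`, i.e. `λ_B(A) = μ(h(A) ∩ B)/μ(B)`. -/
def condPull (μ : Measure E) (B : Set E) (h : E → E) : Measure E :=
  Measure.comap h (ProbabilityTheory.cond μ B)

/-- There exist `j` pairwise disjoint closed balls of radius `ρ` centered in `K`. -/
def PackingNum (K : Set E) (ρ : ℝ) (j : ℕ) : Prop :=
  ∃ c : Fin j → E, (∀ i, c i ∈ K) ∧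
    Pairwise fun i i' => Disjoint (closedBall (c i) ρ) (closedBall (c i') ρ)

end

-- ==================== Auxiliary lemmas ====================

section Aux

open MeasureTheory Metric Set
open scoped ENNReal NNReal

set_option linter.unusedSectionVars false

variable {E : Type*} [NormedAddCommGroup E] [NormedSpace ℝ E]
  [MeasurableSpace E] [BorelSpace E]

lemma le_infDist_aux {s : Set E} (hs : s.Nonempty) {x : E} {t : ℝ}
    (h : ∀ y ∈ s, t ≤ dist x y) : t ≤ Metric.infDist x s := by
  by_contra hlt
  push_neg at hlt
  obtain ⟨y, hy, hd⟩ := (Metric.infDist_lt_iff hs).1 hlt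
  exact absurd (h y hy) (by linarith)

lemma isOpen_compl_msupp (μ : Measure E) : IsOpen (msupp μ)ᶜ := by
  rw [Metric.isOpen_iff]
  intro x hx
  simp only [msupp, mem_compl_iff, mem_setOf_eq, not_forall] at hx
  obtain ⟨ε, hε, hμε⟩ := hx
  push_neg at hμε
  have hε0 : μ (ball x ε) = 0 := le_antisymm hμε zero_le
  refine ⟨ε / 2, by linarith, fun y hy => ?_⟩
  simp only [msupp, mem_compl_iff, mem_setOf_eq, not_forall]
  refine ⟨ε / 2, by linarith, ?_⟩
  push_neg
  refine le_trans (measure_mono fun z hz => ?_) hε0.le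
  have h1 := mem_ball.1 hz
  have h2 := mem_ball.1 hy
  exact mem_ball.2 (by calc dist z x ≤ dist z y + dist y x := dist_triangle _ _ _
    _ < ε := by linarith)

lemma isClosed_msupp (μ : Measure E) : IsClosed (msupp μ) :=
  isOpen_compl_iff.1 (isOpen_compl_msupp μ)

lemma msupp_compl_null (μ : Measure E) [SecondCountableTopology E] : μ (msupp μ)ᶜ = 0 := by
  apply measure_null_of_locally_null
  intro x hx
  simp only [msupp, mem_compl_iff, mem_setOf_eq, not_forall] at hx
  obtain ⟨ε, hε, hμε⟩ := hx
  push_neg at hμε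
  exact ⟨ball x ε, mem_nhdsWithin_of_mem_nhds (ball_mem_nhds x hε),
    le_antisymm hμε zero_le⟩

lemma ae_mem_msupp (μ : Measure E) [SecondCountableTopology E] :
    ∀ᵐ x ∂μ, x ∈ msupp μ := by
  have h := msupp_compl_null μ
  rw [Filter.eventually_iff, MeasureTheory.mem_ae_iff]
  simpa using h

lemma msupp_bounded {μ : Measure E} [IsProbabilityMeasure μ] {s0 ε0 C1 C2 : ℝ}
    (hμ : IsAhlfors μ s0 ε0 C1 C2) : Bornology.IsBounded (msupp μ) := by
  obtain ⟨hs0, hε0, hC1, hC2, hreg, -⟩ := hμ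
  by_contra hub
  have hK : ∀ R : ℝ, ∃ y ∈ msupp μ, R < ‖y‖ := by
    intro R
    by_contra h
    push_neg at h
    exact hub (isBounded_iff_forall_norm_le.2 ⟨R, h⟩)
  have hstep : ∀ x : E, ∃ y : E, y ∈ msupp μ ∧ ‖x‖ + ε0 < ‖y‖ := by
    intro x
    obtain ⟨y, hy, hny⟩ := hK (‖x‖ + ε0)
    exact ⟨y, hy, hny⟩
  choose F hF1 hF2 using hstep
  obtain ⟨x0, hx0, -⟩ := hK 0
  set g : ℕ → E := fun n => F^[n+1] x0 with hg
  have hgK : ∀ n, g n ∈ msupp μ := by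
    intro n
    simp only [hg, Function.iterate_succ_apply']
    exact hF1 _
  have hgrow : ∀ n, ‖g n‖ + ε0 < ‖g (n+1)‖ := by
    intro n
    simp only [hg, Function.iterate_succ_apply' F (n+1)]
    exact hF2 _
  have hmono : ∀ i j : ℕ, i < j → ‖g i‖ + ε0 ≤ ‖g j‖ := by
    intro i j
    induction j with
    | zero => intro h; exact absurd h (by omega)
    | succ l ih =>
      intro hij
      rcases Nat.lt_succ_iff_lt_or_eq.1 hij with h | h
      · have h1 := ih h
        have h2 := hgrow l
        linarith
      · subst h; exact (hgrow i).le
  have hdist : ∀ i j : ℕ, i ≠ j → ε0 ≤ dist (g i) (g j) := by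
    intro i j hij
    rcases Nat.lt_or_ge i j with h | h
    · have := hmono i j h
      calc ε0 ≤ ‖g j‖ - ‖g i‖ := by linarith
        _ ≤ ‖g j - g i‖ := by
            have := norm_sub_norm_le (g j) (g i); linarith
        _ = dist (g i) (g j) := by rw [dist_eq_norm, norm_sub_rev]
    · have hlt : j < i := lt_of_le_of_ne h (Ne.symm hij)
      have := hmono j i hlt
      calc ε0 ≤ ‖g i‖ - ‖g j‖ := by linarith
        _ ≤ ‖g i - g j‖ := by
            have := norm_sub_norm_le (g i) (g j); linarith
        _ = dist (g i) (g j) := by rw [dist_eq_norm]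
  have hball : ∀ n : ℕ, ENNReal.ofReal (C1 * (ε0/3) ^ s0) ≤ μ (closedBall (g n) (ε0/3)) := by
    intro n
    exact (hreg (g n) (hgK n) (ε0/3) (by linarith) (by linarith)).1
  have hpos : 0 < C1 * (ε0/3) ^ s0 := by positivity
  obtain ⟨N, hN⟩ := exists_nat_gt (1 / (C1 * (ε0/3) ^ s0))
  have hdisjb : (↑(Finset.range N) : Set ℕ).PairwiseDisjoint
      (fun i => closedBall (g i) (ε0/3)) := by
    intro i _ j _ hij
    apply closedBall_disjoint_closedBall
    have := hdist i j hij
    linarith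
  have hsum : μ (⋃ i ∈ Finset.range N, closedBall (g i) (ε0/3))
      = ∑ i ∈ Finset.range N, μ (closedBall (g i) (ε0/3)) :=
    measure_biUnion_finset hdisjb (fun i _ => measurableSet_closedBall)
  have hub1 : (N : ℝ≥0∞) * ENNReal.ofReal (C1 * (ε0/3) ^ s0) ≤ 1 := by
    calc (N : ℝ≥0∞) * ENNReal.ofReal (C1 * (ε0/3) ^ s0)
        = ∑ _i ∈ Finset.range N, ENNReal.ofReal (C1 * (ε0/3) ^ s0) := by
          rw [Finset.sum_const, Finset.card_range, nsmul_eq_mul]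
      _ ≤ ∑ i ∈ Finset.range N, μ (closedBall (g i) (ε0/3)) :=
          Finset.sum_le_sum fun i _ => hball i
      _ = μ (⋃ i ∈ Finset.range N, closedBall (g i) (ε0/3)) := hsum.symm
      _ ≤ 1 := prob_le_one
  have hreal : (N : ℝ) * (C1 * (ε0/3) ^ s0) ≤ 1 := by
    have h2 : ((N : ℝ≥0∞) * ENNReal.ofReal (C1 * (ε0/3) ^ s0)).toReal ≤ (1 : ℝ≥0∞).toReal :=
      ENNReal.toReal_mono (by norm_num) hub1
    rw [ENNReal.toReal_mul, ENNReal.toReal_ofReal hpos.le, ENNReal.toReal_one] at h2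
    simpa using h2
  rw [div_lt_iff₀ hpos] at hN
  nlinarith

lemma integrable_infDist_rpow (μ : Measure E) [IsProbabilityMeasure μ]
    [SecondCountableTopology E] {r : ℝ} (hr : 0 ≤ r)
    (hbd : Bornology.IsBounded (msupp μ))
    {s : Set E} (hs : s.Nonempty) :
    Integrable (fun x => Metric.infDist x s ^ r) μ := by
  obtain ⟨b0, hb0⟩ := hs
  obtain ⟨R, hR⟩ := isBounded_iff_forall_norm_le.1 hbd
  have hcont : Continuous (fun x => Metric.infDist x s ^ r) :=
    (continuous_infDist_pt s).rpow_const (fun x => Or.inr hr)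
  refine Integrable.mono' (integrable_const ((R + ‖b0‖ + 1) ^ r))
    hcont.aestronglyMeasurable ?_
  filter_upwards [ae_mem_msupp μ] with x hx
  rw [Real.norm_of_nonneg (Real.rpow_nonneg Metric.infDist_nonneg r)]
  apply Real.rpow_le_rpow Metric.infDist_nonneg _ hr
  calc Metric.infDist x s ≤ dist x b0 := Metric.infDist_le_dist_of_mem hb0
    _ ≤ ‖x‖ + ‖b0‖ := by rw [dist_eq_norm]; exact norm_sub_le x b0
    _ ≤ R + ‖b0‖ + 1 := by have := hR x hx; linarith

lemma quantErrPow_le_integral (μ : Measure E) (r : ℝ) (n : ℕ) {β : Finset E}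
    (hβ : β.Nonempty) (hc : β.card ≤ n) :
    quantErrPow μ r n ≤ ∫ x, Metric.infDist x (β : Set E) ^ r ∂μ := by
  apply csInf_le
  · refine ⟨0, fun I hI => ?_⟩
    obtain ⟨ζ, -, -, rfl⟩ := hI
    exact integral_nonneg fun x => Real.rpow_nonneg Metric.infDist_nonneg r
  · exact ⟨β, hβ, hc, rfl⟩

end Aux

set_option maxHeartbeats 4000000

open scoped ENNReal

/-- There is a positive integer `c` such that for every `k ≥ k0`, every
`n ≥ c·φ_k`, every `n`-optimal set `α` and every Voronoi partition `P`: if `σ ∈ Ω_k`, `a ∈ α`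
and `P_a(α) ∩ A_σ ≠ ∅`, then `d(a,c_σ) ≤ (13/2)·m^{-k}`. -/
theorem stmt14 {E : Type*} [NormedAddCommGroup E] [NormedSpace ℝ E]
    [MeasurableSpace E] [BorelSpace E] [FiniteDimensional ℝ E]
    (r : ℝ) (hr : 0 < r)
    (μ : MeasureTheory.Measure E) [MeasureTheory.IsProbabilityMeasure μ]
    (s0 ε0 C1 C2 : ℝ) (hμ : IsAhlfors μ s0 ε0 C1 C2)
    (m : ℕ) (hm : 2 ≤ m) (k0 : ℕ)
    (hk0 : 2 * ((m : ℝ) ^ k0)⁻¹ < ε0)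
    (hk0min : ∀ j : ℕ, 2 * ((m : ℝ) ^ j)⁻¹ < ε0 → k0 ≤ j)
    (φ : ℕ → ℕ)
    (hφ : ∀ k, k0 ≤ k →
      IsGreatest {j | PackingNum (msupp μ) (((m : ℝ) ^ k)⁻¹) j} (φ k))
    (ctr : (k : ℕ) → Fin (φ k) → E)
    (hctr : ∀ k, k0 ≤ k → (∀ i, ctr k i ∈ msupp μ) ∧
      Pairwise fun i i' => Disjoint (Metric.closedBall (ctr k i) (((m : ℝ) ^ k)⁻¹))
        (Metric.closedBall (ctr k i') (((m : ℝ) ^ k)⁻¹))) :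
    ∃ c : ℕ, 0 < c ∧
      ∀ k, k0 ≤ k → ∀ n : ℕ, c * φ k ≤ n → ∀ α : Finset E, IsOptimalSet μ r n α →
        ∀ P : E → Set E, IsVoronoiPartition α P →
          ∀ σ : Fin (φ k), ∀ a ∈ α,
            (P a ∩ Metric.closedBall (ctr k σ) (2 * ((m : ℝ) ^ k)⁻¹)).Nonempty →
            dist a (ctr k σ) ≤ (13 / 2 : ℝ) * ((m : ℝ) ^ k)⁻¹ := by
  classical
  obtain ⟨hs0, hε0, hC1, hC2, hreg, hglob⟩ := hμ
  -- the constant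
  set γ : ℝ := (3/5 : ℝ) ^ r - (2/5 : ℝ) ^ r with hγdef
  have hγpos : 0 < γ := by
    have := Real.rpow_lt_rpow (by norm_num : (0:ℝ) ≤ 2/5) (by norm_num : (2/5:ℝ) < 3/5) hr
    simp only [hγdef]; linarith
  have h2s0pos : (0:ℝ) < (2:ℝ) ^ s0 := Real.rpow_pos_of_pos (by norm_num) s0
  set θ : ℝ := (9/5 : ℝ) ^ r * (C2 * (2:ℝ) ^ s0) / (γ * C1) with hθdef
  have hθpos : 0 < θ := by
    have h95 : (0:ℝ) < (9/5 : ℝ) ^ r := Real.rpow_pos_of_pos (by norm_num) r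
    exact div_pos (by positivity) (by positivity)
  refine ⟨⌈θ⌉₊ + 2, by positivity, ?_⟩
  set c : ℕ := ⌈θ⌉₊ + 2 with hcdef
  have hcθ : θ + 1 ≤ (c : ℝ) - 1 := by
    have := Nat.le_ceil θ
    have : (⌈θ⌉₊ : ℝ) + 2 = (c : ℝ) := by simp [hcdef]
    push_cast [hcdef]
    have := Nat.le_ceil θ
    linarith
  clear_value γ θ c
  intro k hk n hn α hopt P hPvor σ a haα hxne
  obtain ⟨hPmeas, hPcover, hPdisj, -, hPvoro⟩ := hPvor
  set δ : ℝ := ((m : ℝ) ^ k)⁻¹ with hδdef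
  have hm1 : (1:ℝ) ≤ (m:ℝ) := by exact_mod_cast hm.trans' (by norm_num)
  have hmpos : (0:ℝ) < (m:ℝ) ^ k := by positivity
  have hδpos : 0 < δ := by positivity
  have hδε : 2 * δ < ε0 := by
    have hpow : (m : ℝ) ^ k0 ≤ (m : ℝ) ^ k := pow_le_pow_right₀ hm1 hk
    have h1 : δ ≤ ((m : ℝ) ^ k0)⁻¹ := by
      apply inv_anti₀ (by positivity) hpow
    nlinarith [hk0]
  set K : Set E := msupp μ with hKdef
  have hKnull : μ Kᶜ = 0 := msupp_compl_null μ
  have haeK : ∀ᵐ x ∂μ, x ∈ K := ae_mem_msupp μ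
  have hKbd : Bornology.IsBounded K := msupp_bounded ⟨hs0, hε0, hC1, hC2, hreg, hglob⟩
  set cc : Fin (φ k) → E := ctr k with hccdef
  obtain ⟨hccK, hccdisj⟩ := hctr k hk
  -- Step A : covering of K by balls of radius 2δ around centers
  have hcover : ∀ y ∈ K, ∃ τ : Fin (φ k), dist y (cc τ) ≤ 2 * δ := by
    intro y hy
    by_contra hno
    push_neg at hno
    have hpack : PackingNum K δ (φ k + 1) := by
      refine ⟨Fin.snoc cc y, ?_, ?_⟩
      · intro i
        refine Fin.lastCases ?_ ?_ i
        · simpa using hy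
        · intro j; simpa using hccK j
      · intro i j hij
        revert hij
        induction i using Fin.lastCases with
        | last =>
          induction j using Fin.lastCases with
          | last => intro hij; exact absurd rfl hij
          | cast j' =>
            intro hij
            simp only [Fin.snoc_last, Fin.snoc_castSucc]
            apply closedBall_disjoint_closedBall
            have h1 := hno j'
            have h2 : dist y (cc j') = dist (cc j') y := dist_comm _ _
            linarith
        | cast i' =>
          induction j using Fin.lastCases with
          | last =>
            intro hij
            simp only [Fin.snoc_last, Fin.snoc_castSucc]
            apply closedBall_disjoint_closedBall
            have h1 := hno i'
            have h2 : dist y (cc i') = dist (cc i') y := dist_comm _ _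
            linarith
          | cast j' =>
            intro hij
            simp only [Fin.snoc_castSucc]
            refine hccdisj ?_
            intro hEq
            exact hij (by rw [hEq])
    have hle : φ k + 1 ≤ φ k := (hφ k hk).2 hpack
    omega
  -- φ k is positive
  have hφpos : 0 < φ k := σ.pos
  -- Step C : lower bound for δ ^ s0
  have hδs : 1 ≤ (φ k : ℝ) * (C2 * (2:ℝ) ^ s0 * δ ^ s0) := by
    have hcov2 : K ⊆ ⋃ τ ∈ (Finset.univ : Finset (Fin (φ k))), closedBall (cc τ) (2 * δ) := by
      intro y hy
      obtain ⟨τ, hτ⟩ := hcover y hy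
      exact mem_biUnion (Finset.mem_univ τ) (mem_closedBall.2 hτ)
    have hKmeas : MeasurableSet K := (isClosed_msupp μ).measurableSet
    have h1K : (1 : ℝ≥0∞) ≤ μ K := by
      have := measure_add_measure_compl (μ := μ) hKmeas
      rw [hKnull, add_zero] at this
      rw [this]
      exact le_of_eq (measure_univ).symm
    have hsum : μ K ≤ ∑ τ ∈ (Finset.univ : Finset (Fin (φ k))),
        μ (closedBall (cc τ) (2 * δ)) :=
      (measure_mono hcov2).trans (measure_biUnion_finset_le _ _)
    have hbound : ∀ τ : Fin (φ k),
        μ (closedBall (cc τ) (2 * δ)) ≤ ENNReal.ofReal (C2 * (2*δ) ^ s0) := by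
      intro τ
      exact hglob (cc τ) (2*δ) (by linarith)
    have htot : (1 : ℝ≥0∞) ≤ (φ k : ℝ≥0∞) * ENNReal.ofReal (C2 * (2*δ) ^ s0) := by
      calc (1 : ℝ≥0∞) ≤ μ K := h1K
        _ ≤ ∑ τ ∈ (Finset.univ : Finset (Fin (φ k))), μ (closedBall (cc τ) (2 * δ)) := hsum
        _ ≤ ∑ _τ ∈ (Finset.univ : Finset (Fin (φ k))), ENNReal.ofReal (C2 * (2*δ) ^ s0) :=
            Finset.sum_le_sum fun τ _ => hbound τ
        _ = (φ k : ℝ≥0∞) * ENNReal.ofReal (C2 * (2*δ) ^ s0) := by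
            rw [Finset.sum_const, Finset.card_univ, Fintype.card_fin, nsmul_eq_mul]
    have hC2pos : (0:ℝ) < C2 * (2*δ) ^ s0 := by positivity
    have hreal : (1 : ℝ) ≤ (φ k : ℝ) * (C2 * (2*δ) ^ s0) := by
      have h2 : ((1 : ℝ≥0∞)).toReal ≤ ((φ k : ℝ≥0∞) * ENNReal.ofReal (C2 * (2*δ) ^ s0)).toReal := by
        apply ENNReal.toReal_mono ?_ htot
        exact ENNReal.mul_ne_top (by simp) ENNReal.ofReal_ne_top
      rw [ENNReal.toReal_one, ENNReal.toReal_mul, ENNReal.toReal_ofReal hC2pos.le] at h2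
      simpa using h2
    have hrw : (2*δ) ^ s0 = (2:ℝ) ^ s0 * δ ^ s0 := Real.mul_rpow (by norm_num) hδpos.le
    rw [hrw] at hreal
    linarith [hreal]
  -- integrability of the α-integrand
  have hαne : (α : Set E).Nonempty := ⟨hopt.1.choose, hopt.1.choose_spec⟩
  have hintα : Integrable (fun x => infDist x (α : Set E) ^ r) μ :=
    integrable_infDist_rpow μ hr.le hKbd hαne
  -- KEY CLAIM : the centers are close to α
  have hkey : infDist (cc σ) (α : Set E) ≤ (5/2) * δ := by
    by_contra hD
    push_neg at hD
    rcases lt_or_eq_of_le hopt.2.1 with hcard | hcard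
    · -- Case 1 : card α < n, just add the center cc σ
      set β : Finset E := insert (cc σ) α with hβdef
      have hccβ : cc σ ∈ (β : Set E) := by simp [hβdef]
      have hβne : β.Nonempty := Finset.insert_nonempty _ _
      have hβcard : β.card ≤ n := by
        have h1 := Finset.card_insert_le (cc σ) α
        rw [← hβdef] at h1
        omega
      have hβsub : (α : Set E) ⊆ (β : Set E) := by
        intro z hz
        simp only [hβdef, Finset.coe_insert, mem_insert_iff]
        exact Or.inr hz
      have hintβ : Integrable (fun x => infDist x (β : Set E) ^ r) μ :=
        integrable_infDist_rpow μ hr.le hKbd ⟨cc σ, hccβ⟩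
      set B : Set E := closedBall (cc σ) δ with hBdef
      have hBmeas : MeasurableSet B := measurableSet_closedBall
      have hfg : ∀ x : E, infDist x (β : Set E) ^ r ≤ infDist x (α : Set E) ^ r := fun x =>
        Real.rpow_le_rpow infDist_nonneg (infDist_le_infDist_of_subset hβsub hαne) hr.le
      have hB1 : ∀ x ∈ B, infDist x (β : Set E) ^ r ≤ δ ^ r := by
        intro x hx
        apply Real.rpow_le_rpow infDist_nonneg _ hr.le
        calc infDist x (β : Set E) ≤ dist x (cc σ) := infDist_le_dist_of_mem hccβ
          _ ≤ δ := mem_closedBall.1 hx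
      have hB2 : ∀ x ∈ B, ((3/2) * δ) ^ r ≤ infDist x (α : Set E) ^ r := by
        intro x hx
        apply Real.rpow_le_rpow (by positivity) _ hr.le
        apply le_infDist_aux hαne
        intro y hy
        have h1 : infDist (cc σ) (α : Set E) ≤ dist (cc σ) y := infDist_le_dist_of_mem hy
        have h2 : dist x (cc σ) ≤ δ := mem_closedBall.1 hx
        have h3 := dist_triangle (cc σ) x y
        have h4 : dist (cc σ) x = dist x (cc σ) := dist_comm _ _
        linarith
      have hμB : C1 * δ ^ s0 ≤ (μ B).toReal := by
        have h := (hreg (cc σ) (hccK σ) δ hδpos (by linarith)).1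
        exact (ENNReal.ofReal_le_iff_le_toReal (measure_ne_top μ B)).1 h
      have hμBpos : (0:ℝ) < (μ B).toReal := lt_of_lt_of_le (by positivity) hμB
      have hsplit1 : ∫ x, infDist x (α : Set E) ^ r ∂μ
          = (∫ x in B, infDist x (α : Set E) ^ r ∂μ)
            + ∫ x in Bᶜ, infDist x (α : Set E) ^ r ∂μ :=
        (integral_add_compl hBmeas hintα).symm
      have hsplit2 : ∫ x, infDist x (β : Set E) ^ r ∂μ
          = (∫ x in B, infDist x (β : Set E) ^ r ∂μ)
            + ∫ x in Bᶜ, infDist x (β : Set E) ^ r ∂μ :=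
        (integral_add_compl hBmeas hintβ).symm
      have hIβB : ∫ x in B, infDist x (β : Set E) ^ r ∂μ ≤ δ ^ r * (μ B).toReal := by
        calc ∫ x in B, infDist x (β : Set E) ^ r ∂μ ≤ ∫ _x in B, δ ^ r ∂μ :=
              setIntegral_mono_on hintβ.integrableOn
                (integrable_const _).integrableOn hBmeas hB1
          _ = δ ^ r * (μ B).toReal := by rw [setIntegral_const, smul_eq_mul, measureReal_def]; ring
      have hIαB : ((3/2) * δ) ^ r * (μ B).toReal
          ≤ ∫ x in B, infDist x (α : Set E) ^ r ∂μ := by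
        calc ((3/2) * δ) ^ r * (μ B).toReal = ∫ _x in B, ((3/2) * δ) ^ r ∂μ := by
              rw [setIntegral_const, smul_eq_mul, measureReal_def]; ring
          _ ≤ ∫ x in B, infDist x (α : Set E) ^ r ∂μ :=
              setIntegral_mono_on (integrable_const _).integrableOn
                hintα.integrableOn hBmeas hB2
      have hIc : ∫ x in Bᶜ, infDist x (β : Set E) ^ r ∂μ
          ≤ ∫ x in Bᶜ, infDist x (α : Set E) ^ r ∂μ :=
        setIntegral_mono_on hintβ.integrableOn hintα.integrableOn
          hBmeas.compl (fun x _ => hfg x)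
      have hopt_le : ∫ x, infDist x (α : Set E) ^ r ∂μ
          ≤ ∫ x, infDist x (β : Set E) ^ r ∂μ := by
        rw [hopt.2.2]
        exact quantErrPow_le_integral μ r n hβne hβcard
      have hlt : δ ^ r < ((3/2) * δ) ^ r :=
        Real.rpow_lt_rpow hδpos.le (by linarith) hr
      linarith [mul_pos (sub_pos.2 hlt) hμBpos]
    · -- Case 2 : card α = n
      have hune : (Finset.univ : Finset (Fin (φ k))).Nonempty := ⟨σ, Finset.mem_univ σ⟩
      set M : ℝ := Finset.univ.sup' hune (fun τ => infDist (cc τ) (α : Set E)) with hMdef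
      obtain ⟨σ', -, hσ'⟩ := Finset.exists_mem_eq_sup' hune
        (fun τ => infDist (cc τ) (α : Set E))
      have hMτ : ∀ τ, infDist (cc τ) (α : Set E) ≤ M := by
        intro τ
        rw [hMdef]
        exact Finset.le_sup' (fun τ => infDist (cc τ) (α : Set E)) (Finset.mem_univ τ)
      have hM : (5/2) * δ < M := lt_of_lt_of_le hD (hMτ σ)
      have hMσ' : infDist (cc σ') (α : Set E) = M := hσ'.symm
      have hMpos : 0 < M := by linarith
      -- nearest points in α to the centers
      have hnear : ∀ τ : Fin (φ k), ∃ y ∈ (α : Set E),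
          infDist (cc τ) (α : Set E) = dist (cc τ) y :=
        fun τ => (α.finite_toSet.isCompact).exists_infDist_eq_dist hαne (cc τ)
      choose aN haN1 haN2 using hnear
      set N : Finset E := Finset.image aN Finset.univ with hNdef
      have hNcard : N.card ≤ φ k := Finset.card_image_le.trans (by simp)
      -- the cheap cell
      set A' : Finset E := α \ N with hA'def
      have hq : (c - 1) * φ k + φ k = c * φ k := by
        rw [hcdef]
        have : (⌈θ⌉₊ + 2 - 1) = ⌈θ⌉₊ + 1 := by omega
        rw [this]
        ring
      have hA'card : (c - 1) * φ k ≤ A'.card := by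
        have h1 : α.card - N.card ≤ (α \ N).card := Finset.le_card_sdiff N α
        have h2 : (c - 1) * φ k ≤ n - φ k := Nat.le_sub_of_add_le (by rw [hq]; exact hn)
        have h3 : n - φ k ≤ n - N.card := Nat.sub_le_sub_left hNcard n
        rw [hA'def]
        omega
      have hA'pos : 0 < A'.card := by
        have h1 : 1 ≤ c - 1 := by rw [hcdef]; omega
        have := Nat.mul_le_mul h1 hφpos
        omega
      obtain ⟨b, hbA', hbmin⟩ := Finset.exists_min_image A'
        (fun t => (μ (P t)).toReal) (Finset.card_pos.1 hA'pos)
      have hbα : b ∈ α := (Finset.mem_sdiff.1 hbA').1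
      have hbN : b ∉ N := (Finset.mem_sdiff.1 hbA').2
      set v : ℝ := (μ (P b)).toReal with hvdef
      have hvnn : 0 ≤ v := ENNReal.toReal_nonneg
      -- total mass of the cells is 1
      have hPdisj' : (↑α : Set E).PairwiseDisjoint P := by
        intro t ht u hu htu
        exact hPdisj t (Finset.mem_coe.1 ht) u (Finset.mem_coe.1 hu) htu
      have hcells : ∑ t ∈ α, (μ (P t)).toReal = 1 := by
        have h1 : μ (⋃ t ∈ α, P t) = ∑ t ∈ α, μ (P t) :=
          measure_biUnion_finset hPdisj' (fun t ht => hPmeas t ht)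
        rw [hPcover] at h1
        have h2 : (∑ t ∈ α, μ (P t)).toReal = ∑ t ∈ α, (μ (P t)).toReal :=
          ENNReal.toReal_sum (fun t _ => measure_ne_top μ _)
        rw [← h2, ← h1]
        simp
      -- v is at most 1 / ((c-1) * φ k)
      have hvsmall : v * (((c : ℝ) - 1) * (φ k : ℝ)) ≤ 1 := by
        have h1 : (A'.card : ℝ) * v ≤ ∑ t ∈ A', (μ (P t)).toReal := by
          have := Finset.card_nsmul_le_sum A' (fun t => (μ (P t)).toReal) v
            (fun t ht => hbmin t ht)
          simpa [nsmul_eq_mul] using this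
        have h2 : ∑ t ∈ A', (μ (P t)).toReal ≤ ∑ t ∈ α, (μ (P t)).toReal :=
          Finset.sum_le_sum_of_subset_of_nonneg (Finset.sdiff_subset)
            (fun t _ _ => ENNReal.toReal_nonneg)
        have h3 : (((c : ℝ) - 1) * (φ k : ℝ)) ≤ (A'.card : ℝ) := by
          have := hA'card
          have hc1 : ((c - 1 : ℕ) : ℝ) = (c : ℝ) - 1 := by
            have : 1 ≤ c := by rw [hcdef]; omega
            push_cast [Nat.cast_sub this]
            ring
          calc ((c : ℝ) - 1) * (φ k : ℝ) = (((c-1) * φ k : ℕ) : ℝ) := by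
                push_cast [hc1]; ring
            _ ≤ (A'.card : ℝ) := by exact_mod_cast hA'card
        have h5 : v * (((c:ℝ) - 1) * (φ k : ℝ)) ≤ v * (A'.card : ℝ) :=
          mul_le_mul_of_nonneg_left h3 hvnn
        have h6 : (A'.card : ℝ) * v ≤ 1 := le_trans (h1.trans h2) (le_of_eq hcells)
        linarith
      -- the competitor set
      set β : Finset E := insert (cc σ') (α.erase b) with hβdef
      have hccβ : cc σ' ∈ (β : Set E) := by simp [hβdef]
      have hβne : β.Nonempty := Finset.insert_nonempty _ _
      have hβcard : β.card ≤ n := by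
        have h1 := Finset.card_insert_le (cc σ') (α.erase b)
        have h2 : (α.erase b).card = α.card - 1 := Finset.card_erase_of_mem hbα
        rw [← hβdef] at h1
        have h4 : 1 ≤ α.card := Finset.card_pos.2 hopt.1
        omega
      have hAerase_sub : ∀ t, t ∈ α.erase b → t ∈ (β : Set E) := by
        intro t ht
        simp only [hβdef, Finset.coe_insert, mem_insert_iff]
        exact Or.inr (by exact_mod_cast ht)
      have hintβ : Integrable (fun x => infDist x (β : Set E) ^ r) μ :=
        integrable_infDist_rpow μ hr.le hKbd ⟨cc σ', hccβ⟩
      set B' : Set E := closedBall (cc σ') δ with hB'def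
      have hB'meas : MeasurableSet B' := measurableSet_closedBall
      have hμB : C1 * δ ^ s0 ≤ (μ B').toReal := by
        have h := (hreg (cc σ') (hccK σ') δ hδpos (by linarith)).1
        exact (ENNReal.ofReal_le_iff_le_toReal (measure_ne_top μ B')).1 h
      set Q : ℝ := (μ B').toReal with hQdef
      have hQpos : (0:ℝ) < Q := lt_of_lt_of_le (by positivity) hμB
      -- pointwise bounds
      have hb1 : ∀ x ∈ B', infDist x (β : Set E) ^ r ≤ δ ^ r := by
        intro x hx
        apply Real.rpow_le_rpow infDist_nonneg _ hr.le
        calc infDist x (β : Set E) ≤ dist x (cc σ') := infDist_le_dist_of_mem hccβ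
          _ ≤ δ := mem_closedBall.1 hx
      have hb2 : ∀ x ∈ B', (M - δ) ^ r ≤ infDist x (α : Set E) ^ r := by
        intro x hx
        apply Real.rpow_le_rpow (by linarith) _ hr.le
        apply le_infDist_aux hαne
        intro y hy
        have h1 : infDist (cc σ') (α : Set E) ≤ dist (cc σ') y := infDist_le_dist_of_mem hy
        have h2 : dist x (cc σ') ≤ δ := mem_closedBall.1 hx
        have h3 := dist_triangle (cc σ') x y
        have h4 : dist (cc σ') x = dist x (cc σ') := dist_comm _ _
        rw [hMσ'] at h1
        linarith
      have hb3 : ∀ x ∈ K, infDist x (β : Set E) ^ r ≤ (M + 2 * δ) ^ r := by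
        intro x hx
        apply Real.rpow_le_rpow infDist_nonneg _ hr.le
        obtain ⟨τ, hτ⟩ := hcover x hx
        have haNβ : aN τ ∈ (β : Set E) := by
          apply hAerase_sub
          apply Finset.mem_erase.2
          refine ⟨?_, by exact_mod_cast haN1 τ⟩
          intro hEq
          apply hbN
          rw [hNdef, ← hEq]
          exact Finset.mem_image_of_mem aN (Finset.mem_univ τ)
        calc infDist x (β : Set E) ≤ dist x (aN τ) := infDist_le_dist_of_mem haNβ
          _ ≤ dist x (cc τ) + dist (cc τ) (aN τ) := dist_triangle _ _ _
          _ ≤ 2 * δ + M := by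
              have h1 := (haN2 τ).symm.trans_le (hMτ τ)
              exact add_le_add hτ h1
          _ = M + 2 * δ := by ring
      have hb4 : ∀ t ∈ α.erase b, ∀ x ∈ P t \ B',
          infDist x (β : Set E) ^ r ≤ infDist x (α : Set E) ^ r := by
        intro t ht x hx
        apply Real.rpow_le_rpow infDist_nonneg _ hr.le
        have htα : t ∈ α := Finset.mem_of_mem_erase ht
        have h1 : dist x t = infDist x (α : Set E) := hPvoro t htα hx.1
        calc infDist x (β : Set E) ≤ dist x t := infDist_le_dist_of_mem (hAerase_sub t ht)
          _ = infDist x (α : Set E) := h1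
      -- splitting of the integral
      have hTmeas : ∀ t ∈ α, MeasurableSet (P t \ B') :=
        fun t ht => (hPmeas t ht).diff hB'meas
      have hsplit : ∀ f : E → ℝ, Integrable f μ →
          ∫ x, f x ∂μ = (∫ x in B', f x ∂μ) + ∑ t ∈ α, ∫ x in P t \ B', f x ∂μ := by
        intro f hf
        have h1 := integral_add_compl hB'meas hf
        have h2 : B'ᶜ = ⋃ t ∈ α, (P t \ B') := by
          ext x
          simp only [mem_compl_iff, mem_iUnion, mem_diff, exists_prop]
          constructor
          · intro hx
            have hx2 : x ∈ ⋃ t ∈ α, P t := hPcover ▸ mem_univ x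
            simp only [mem_iUnion, exists_prop] at hx2
            obtain ⟨t, ht, hxt⟩ := hx2
            exact ⟨t, ht, hxt, hx⟩
          · rintro ⟨t, -, -, hx⟩
            exact hx
        have h3 : ∫ x in B'ᶜ, f x ∂μ = ∑ t ∈ α, ∫ x in P t \ B', f x ∂μ := by
          rw [h2]
          apply integral_biUnion_finset α hTmeas
          · intro t ht u hu htu
            exact (hPdisj t (Finset.mem_coe.1 ht) u (Finset.mem_coe.1 hu) htu).mono
              diff_subset diff_subset
          · exact fun t _ => hf.integrableOn
        linarith
      have hEα := hsplit _ hintα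
      have hEβ := hsplit _ hintβ
      rw [← Finset.add_sum_erase α _ hbα] at hEα hEβ
      -- bounds on the pieces
      have hI1 : ∫ x in B', infDist x (β : Set E) ^ r ∂μ ≤ δ ^ r * Q := by
        calc ∫ x in B', infDist x (β : Set E) ^ r ∂μ ≤ ∫ _x in B', δ ^ r ∂μ :=
              setIntegral_mono_on hintβ.integrableOn
                (integrable_const _).integrableOn hB'meas hb1
          _ = δ ^ r * Q := by rw [setIntegral_const, smul_eq_mul, hQdef, measureReal_def]; ring
      have hI2 : (M - δ) ^ r * Q ≤ ∫ x in B', infDist x (α : Set E) ^ r ∂μ := by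
        calc (M - δ) ^ r * Q = ∫ _x in B', (M - δ) ^ r ∂μ := by
              rw [setIntegral_const, smul_eq_mul, hQdef, measureReal_def]; ring
          _ ≤ ∫ x in B', infDist x (α : Set E) ^ r ∂μ :=
              setIntegral_mono_on (integrable_const _).integrableOn
                hintα.integrableOn hB'meas hb2
      have hI3 : ∫ x in P b \ B', infDist x (β : Set E) ^ r ∂μ ≤ (M + 2 * δ) ^ r * v := by
        have hae : (fun x => infDist x (β : Set E) ^ r)
            ≤ᵐ[μ.restrict (P b \ B')] (fun _ => (M + 2 * δ) ^ r) :=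
          ae_restrict_of_ae (haeK.mono fun x hx => hb3 x hx)
        calc ∫ x in P b \ B', infDist x (β : Set E) ^ r ∂μ
            ≤ ∫ _x in P b \ B', (M + 2 * δ) ^ r ∂μ :=
              setIntegral_mono_ae_restrict hintβ.integrableOn
                (integrable_const _).integrableOn hae
          _ = (μ (P b \ B')).toReal * (M + 2 * δ) ^ r := by
              rw [setIntegral_const, smul_eq_mul, measureReal_def]
          _ ≤ (M + 2 * δ) ^ r * v := by
              have h1 : (μ (P b \ B')).toReal ≤ v := by
                rw [hvdef]
                exact ENNReal.toReal_mono (measure_ne_top μ _)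
                  (measure_mono diff_subset)
              have h2 : (0:ℝ) ≤ (M + 2 * δ) ^ r := Real.rpow_nonneg (by linarith) r
              rw [mul_comm]
              exact mul_le_mul_of_nonneg_left h1 h2
      have hI4 : ∑ t ∈ α.erase b, ∫ x in P t \ B', infDist x (β : Set E) ^ r ∂μ
          ≤ ∑ t ∈ α.erase b, ∫ x in P t \ B', infDist x (α : Set E) ^ r ∂μ := by
        apply Finset.sum_le_sum
        intro t ht
        exact setIntegral_mono_on hintβ.integrableOn hintα.integrableOn
          (hTmeas t (Finset.mem_of_mem_erase ht)) (hb4 t ht)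
      have hI5 : 0 ≤ ∫ x in P b \ B', infDist x (α : Set E) ^ r ∂μ :=
        setIntegral_nonneg (hTmeas b hbα)
          (fun x _ => Real.rpow_nonneg infDist_nonneg r)
      have hopt_le : ∫ x, infDist x (α : Set E) ^ r ∂μ
          ≤ ∫ x, infDist x (β : Set E) ^ r ∂μ := by
        rw [hopt.2.2]
        exact quantErrPow_le_integral μ r n hβne hβcard
      -- the starred inequality
      have hstar : (M - δ) ^ r * Q ≤ δ ^ r * Q + (M + 2 * δ) ^ r * v := by
        linarith
      -- numeric bounds
      have hδM : δ < (2/5) * M := by linarith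
      have hg1 : γ * M ^ r ≤ (M - δ) ^ r - δ ^ r := by
        have e1 : ((3/5) * M) ^ r ≤ (M - δ) ^ r :=
          Real.rpow_le_rpow (by nlinarith) (by linarith) hr.le
        have e2 : δ ^ r ≤ ((2/5) * M) ^ r :=
          Real.rpow_le_rpow hδpos.le (by linarith) hr.le
        have e3 : ((3/5) * M) ^ r = (3/5 : ℝ) ^ r * M ^ r :=
          Real.mul_rpow (by norm_num) hMpos.le
        have e4 : ((2/5) * M) ^ r = (2/5 : ℝ) ^ r * M ^ r :=
          Real.mul_rpow (by norm_num) hMpos.le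
        rw [e3] at e1
        rw [e4] at e2
        rw [hγdef]
        ring_nf
        ring_nf at e1 e2
        linarith
      have hg2 : (M + 2 * δ) ^ r ≤ (9/5 : ℝ) ^ r * M ^ r := by
        have e1 : (M + 2 * δ) ^ r ≤ ((9/5) * M) ^ r :=
          Real.rpow_le_rpow (by linarith) (by linarith) hr.le
        have e2 : ((9/5) * M) ^ r = (9/5 : ℝ) ^ r * M ^ r :=
          Real.mul_rpow (by norm_num) hMpos.le
        linarith [e1, e2.le, e2.ge]
      have hMr : (0:ℝ) < M ^ r := Real.rpow_pos_of_pos hMpos r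
      -- combine : γ * Q ≤ (9/5)^r * v
      have e5 : γ * M ^ r * Q ≤ (9/5 : ℝ) ^ r * M ^ r * v := by
        have e6 : γ * M ^ r * Q ≤ ((M - δ) ^ r - δ ^ r) * Q :=
          mul_le_mul_of_nonneg_right hg1 hQpos.le
        have e7 : ((M - δ) ^ r - δ ^ r) * Q ≤ (M + 2 * δ) ^ r * v := by linarith [hstar]
        have e8 : (M + 2 * δ) ^ r * v ≤ (9/5 : ℝ) ^ r * M ^ r * v :=
          mul_le_mul_of_nonneg_right hg2 hvnn
        linarith
      have h1 : γ * Q ≤ (9/5 : ℝ) ^ r * v := by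
        have e1' : M ^ r * (γ * Q) ≤ M ^ r * ((9/5 : ℝ) ^ r * v) := by linarith [e5]
        exact le_of_mul_le_mul_left e1' hMr
      -- final contradiction
      have hφR : (0:ℝ) < (φ k : ℝ) := by exact_mod_cast hφpos
      have hc1R : (0:ℝ) < (c : ℝ) - 1 := by
        have : 1 ≤ c := by rw [hcdef]; omega
        have h2 : θ + 1 ≤ (c:ℝ) - 1 := hcθ
        linarith
      have h95 : (0:ℝ) < (9/5 : ℝ) ^ r := Real.rpow_pos_of_pos (by norm_num) r
      have hδs0pos : (0:ℝ) < δ ^ s0 := Real.rpow_pos_of_pos hδpos s0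
      -- γ * C1 * δ^s0 ≤ (9/5)^r * v
      have h2 : γ * (C1 * δ ^ s0) ≤ (9/5 : ℝ) ^ r * v := by
        have := mul_le_mul_of_nonneg_left hμB hγpos.le
        linarith
      -- v ≤ 1 / ((c-1) φ)
      have h3 : v ≤ 1 / (((c:ℝ) - 1) * (φ k : ℝ)) := by
        rw [le_div_iff₀ (by positivity)]
        exact hvsmall
      -- δ^s0 ≥ 1/(C2 2^s0 φ)
      have h4 : 1 / (C2 * (2:ℝ) ^ s0 * (φ k : ℝ)) ≤ δ ^ s0 := by
        rw [div_le_iff₀ (by positivity)]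
        linarith [hδs]
      have h5 : γ * C1 / (C2 * (2:ℝ) ^ s0 * (φ k : ℝ))
          ≤ (9/5 : ℝ) ^ r / (((c:ℝ) - 1) * (φ k : ℝ)) := by
        have e1 : γ * C1 / (C2 * (2:ℝ) ^ s0 * (φ k : ℝ)) ≤ γ * (C1 * δ ^ s0) := by
          have e0 := mul_le_mul_of_nonneg_left h4 (by positivity : (0:ℝ) ≤ γ * C1)
          rw [div_eq_mul_one_div]
          linarith [e0]
        have e2 : (9/5 : ℝ) ^ r * v ≤ (9/5 : ℝ) ^ r / (((c:ℝ) - 1) * (φ k : ℝ)) := by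
          have h3' : v ≤ (((c:ℝ) - 1) * (φ k : ℝ))⁻¹ := by rw [← one_div]; exact h3
          calc (9/5 : ℝ) ^ r * v ≤ (9/5 : ℝ) ^ r * ((((c:ℝ) - 1) * (φ k : ℝ))⁻¹) :=
                mul_le_mul_of_nonneg_left h3' h95.le
            _ = (9/5 : ℝ) ^ r / (((c:ℝ) - 1) * (φ k : ℝ)) := by ring
        linarith
      rw [div_le_div_iff₀ (by positivity) (by positivity)] at h5
      have h6 : γ * C1 * ((c:ℝ) - 1) ≤ (9/5 : ℝ) ^ r * (C2 * (2:ℝ) ^ s0) := by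
        have := h5
        have hcancel : (γ * C1 * ((c:ℝ) - 1)) * (φ k : ℝ)
            ≤ ((9/5 : ℝ) ^ r * (C2 * (2:ℝ) ^ s0)) * (φ k : ℝ) := by linarith [h5]
        exact le_of_mul_le_mul_right hcancel hφR
      have h7 : (c:ℝ) - 1 ≤ θ := by
        rw [hθdef, le_div_iff₀ (by positivity)]
        linarith [h6]
      linarith [hcθ, h7]
  -- conclusion by triangle inequalities
  obtain ⟨x, hxP, hxB⟩ := hxne
  obtain ⟨w, hwα, hw⟩ := (α.finite_toSet.isCompact).exists_infDist_eq_dist hαne (cc σ)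
  have hxσ : dist x (cc σ) ≤ 2 * δ := mem_closedBall.1 hxB
  have hxa : dist x a = infDist x (α : Set E) := hPvoro a haα hxP
  have hxw : dist x a ≤ (9/2) * δ := by
    rw [hxa]
    calc infDist x (α : Set E) ≤ dist x w := infDist_le_dist_of_mem hwα
      _ ≤ dist x (cc σ) + dist (cc σ) w := dist_triangle _ _ _
      _ ≤ 2 * δ + (5/2) * δ := by
          have : dist (cc σ) w = infDist (cc σ) (α : Set E) := hw.symm
          rw [this] at *
          exact add_le_add hxσ (hw ▸ hkey)
      _ = (9/2) * δ := by ring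
  calc dist a (cc σ) ≤ dist a x + dist x (cc σ) := dist_triangle _ _ _
    _ ≤ (9/2) * δ + 2 * δ := by
        rw [dist_comm a x]
        exact add_le_add hxw hxσ
    _ = (13/2) * δ := by ring
end

section
/- There exist a positive integer c and a constant C3 > 0, depending only on C1, C2, s0, ε0, r, q and m, such that for every k ≥ k0, every n with c·φ_k ≤ n < c·φ_{k+1}, every n-optimal set α_n ∈ C_{n,r}(μ), every Voronoi partition (P_a(α_n))_{a∈α_n}, and every a ∈ α_n: I_a(α_n,μ) ≤ C3·m^{−k(s0+r)}. -/
open MeasureTheory Metric Set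

set_option maxHeartbeats 1000000

noncomputable section

open MeasureTheory Metric Set
open scoped ENNReal

variable {E : Type*} [NormedAddCommGroup E] [NormedSpace ℝ E]
  [MeasurableSpace E] [BorelSpace E]

set_option linter.unusedSectionVars false
namespace Stmt16Aux

variable {μ : Measure E}

lemma notmem_msupp {x : E} :
    x ∉ msupp μ ↔ ∃ ε : ℝ, 0 < ε ∧ μ (ball x ε) = 0 := by
  simp only [msupp, mem_setOf_eq, not_forall]
  constructor
  · rintro ⟨ε, hε, h⟩
    exact ⟨ε, hε, by simpa using h⟩
  · rintro ⟨ε, hε, h⟩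
    exact ⟨ε, hε, by simp [h]⟩

lemma isClosed_msupp (μ : Measure E) : IsClosed (msupp μ) := by
  rw [← isOpen_compl_iff, isOpen_iff]
  intro x hx
  obtain ⟨ε, hε, hz⟩ := notmem_msupp.1 hx
  refine ⟨ε / 2, by linarith, fun y hy => ?_⟩
  rw [mem_compl_iff, notmem_msupp]
  refine ⟨ε / 2, by linarith, le_antisymm (le_trans (measure_mono ?_) hz.le) zero_le⟩
  intro z hz'
  have : dist z x ≤ dist z y + dist y x := dist_triangle z y x
  simp only [mem_ball] at *
  linarith

lemma msupp_compl_null [SecondCountableTopology E] (μ : Measure E) :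
    μ (msupp μ)ᶜ = 0 := by
  classical
  have hcov : ∀ x : ↥((msupp μ)ᶜ), ∃ ε : ℝ, 0 < ε ∧ μ (ball (x : E) ε) = 0 :=
    fun x => notmem_msupp.1 x.2
  choose ε hε hεz using hcov
  obtain ⟨T, hTc, hTU⟩ := TopologicalSpace.isOpen_iUnion_countable
    (fun x : ↥((msupp μ)ᶜ) => ball (x : E) (ε x)) (fun x => isOpen_ball)
  have hsub : (msupp μ)ᶜ ⊆ ⋃ x ∈ T, ball (x : E) (ε x) := by
    rw [hTU]
    intro y hy
    exact mem_iUnion.2 ⟨⟨y, hy⟩, mem_ball_self (hε _)⟩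
  refine le_antisymm (le_trans (measure_mono hsub) ?_) zero_le
  rw [(measure_biUnion_null_iff hTc).2 (fun i _ => hεz i)]

lemma ae_mem_msupp [SecondCountableTopology E] (μ : Measure E) :
    ∀ᵐ x ∂μ, x ∈ msupp μ := by
  rw [ae_iff]
  exact msupp_compl_null μ

lemma msupp_nonempty [SecondCountableTopology E] (μ : Measure E) [IsProbabilityMeasure μ] :
    (msupp μ).Nonempty := by
  by_contra h
  rw [not_nonempty_iff_eq_empty] at h
  have := msupp_compl_null μ
  rw [h, compl_empty] at this
  simp at this

lemma nonempty_inter_msupp [SecondCountableTopology E] {S : Set E} (hS : μ S ≠ 0) :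
    (S ∩ msupp μ).Nonempty := by
  rw [nonempty_iff_ne_empty]
  intro h
  apply hS
  have : μ (S ∩ msupp μ) = μ S := measure_inter_conull (msupp_compl_null μ)
  rw [h] at this
  simpa using this.symm

lemma measure_inter_msupp [SecondCountableTopology E] (μ : Measure E) (S : Set E) :
    μ (S ∩ msupp μ) = μ S := measure_inter_conull (msupp_compl_null μ)

end Stmt16Aux

-- Part 2: Ahlfors regular consequences
namespace Stmt16Aux

variable {μ : Measure E} {s0 ε0 C1 C2 : ℝ} [IsFiniteMeasure μ] (hμ : IsAhlfors μ s0 ε0 C1 C2)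
include hμ

lemma toReal_measure_closedBall_ge {x : E} (hx : x ∈ msupp μ) {ε : ℝ} (hε : 0 < ε)
    (hε0 : ε < ε0) : C1 * ε ^ s0 ≤ (μ (closedBall x ε)).toReal :=
  (ENNReal.ofReal_le_iff_le_toReal (measure_ne_top μ _)).1
    ((hμ.2.2.2.2.1 x hx ε hε hε0).1)

lemma toReal_measure_le_of_subset {x : E} {ε : ℝ} (hε : 0 < ε) {S : Set E}
    (hS : S ∩ msupp μ ⊆ closedBall x ε) [SecondCountableTopology E] :
    (μ S).toReal ≤ C2 * ε ^ s0 := by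
  have h1 : μ S = μ (S ∩ msupp μ) := (measure_inter_msupp μ S).symm
  have h2 : μ (S ∩ msupp μ) ≤ ENNReal.ofReal (C2 * ε ^ s0) :=
    le_trans (measure_mono hS) (hμ.2.2.2.2.2 x ε hε)
  rw [h1]
  exact ENNReal.toReal_le_of_le_ofReal
    (mul_nonneg hμ.2.2.2.1.le (Real.rpow_nonneg hε.le s0)) h2

lemma msupp_bounded [IsProbabilityMeasure μ] :
    ∃ R : ℝ, 0 < R ∧ msupp μ ⊆ closedBall (0 : E) R := by
  obtain ⟨hs0, hε0, hC1, hC2, hloc, hglob⟩ := hμ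
  set c' : ℝ := min (C1 * (ε0 / 2) ^ s0) 1 with hc'def
  have hc' : 0 < c' := by
    apply lt_min _ one_pos
    positivity
  -- ν n := real measure of closedBall 0 n tends to 1
  have hmono : Monotone (fun n : ℕ => closedBall (0 : E) n) := by
    intro a b hab
    exact closedBall_subset_closedBall (by exact_mod_cast hab)
  have hUn : ⋃ n : ℕ, closedBall (0 : E) n = univ := iUnion_closedBall_nat 0
  have htt : Filter.Tendsto (fun n : ℕ => (μ (closedBall (0 : E) n)).toReal)
      Filter.atTop (nhds 1) := by
    have h1 := tendsto_measure_iUnion_atTop (μ := μ) hmono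
    rw [hUn, measure_univ] at h1
    have h2 := (ENNReal.tendsto_toReal (by simp : (1 : ENNReal) ≠ ⊤)).comp h1
    exact h2
  have hev : ∀ᶠ n : ℕ in Filter.atTop,
      1 - c' < (μ (closedBall (0 : E) n)).toReal :=
    htt.eventually (eventually_gt_nhds (by linarith))
  obtain ⟨N, hN⟩ := hev.exists
  refine ⟨N + ε0, by positivity, fun x hx => ?_⟩
  by_contra hxout
  have hxd : (N : ℝ) + ε0 < dist x 0 := by
    simp only [mem_closedBall, not_le] at hxout
    exact hxout
  -- the ball around x of radius ε0/2 is disjoint from closedBall 0 N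
  have hdisj : Disjoint (closedBall x (ε0 / 2)) (closedBall (0 : E) N) := by
    apply closedBall_disjoint_closedBall
    linarith
  have hw : C1 * (ε0 / 2) ^ s0 ≤ (μ (closedBall x (ε0 / 2))).toReal := by
    refine (ENNReal.ofReal_le_iff_le_toReal (measure_ne_top μ _)).1 ?_
    exact (hloc x hx (ε0 / 2) (by linarith) (by linarith)).1
  have hsum : μ (closedBall x (ε0 / 2)) + μ (closedBall (0 : E) N) ≤ 1 := by
    rw [← measure_union hdisj measurableSet_closedBall]
    exact prob_le_one
  have hsum' : (μ (closedBall x (ε0 / 2))).toReal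
      + (μ (closedBall (0 : E) N)).toReal ≤ 1 := by
    rw [← ENNReal.toReal_add (measure_ne_top μ _) (measure_ne_top μ _)]
    exact ENNReal.toReal_le_of_le_ofReal one_pos.le (by simpa using hsum)
  have : c' ≤ C1 * (ε0 / 2) ^ s0 := min_le_left _ _
  linarith

end Stmt16Aux

-- Part 3: quantization basics
namespace Stmt16Aux

variable {μ : Measure E} {r s0 ε0 C1 C2 : ℝ}

lemma bddBelow_quantSet (ν : Measure E) (r : ℝ) (n : ℕ) : BddBelow (quantSet ν r n) := by
  refine ⟨0, fun I hI => ?_⟩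
  obtain ⟨α, -, -, rfl⟩ := hI
  exact integral_nonneg fun x => Real.rpow_nonneg infDist_nonneg r

lemma quantErrPow_le {n : ℕ} {β : Finset E} (hne : β.Nonempty) (hcard : β.card ≤ n) :
    quantErrPow μ r n ≤ ∫ x, infDist x (β : Set E) ^ r ∂μ :=
  csInf_le (bddBelow_quantSet μ r n) ⟨β, hne, hcard, rfl⟩

lemma integrable_infDist_rpow [SecondCountableTopology E] [IsFiniteMeasure μ]
    (hr : 0 < r) {R : ℝ} (hK : msupp μ ⊆ closedBall 0 R) (γ : Set E) {b₀ : E} (hb : b₀ ∈ γ) :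
    Integrable (fun x => infDist x γ ^ r) μ := by
  have hc : Continuous fun x : E => infDist x γ ^ r :=
    (Real.continuous_rpow_const hr.le).comp (continuous_infDist_pt γ)
  refine Integrable.mono' (integrable_const ((R + ‖b₀‖) ^ r)) hc.aestronglyMeasurable ?_
  filter_upwards [ae_mem_msupp μ] with x hx
  rw [Real.norm_eq_abs, abs_of_nonneg (Real.rpow_nonneg infDist_nonneg r)]
  apply Real.rpow_le_rpow infDist_nonneg _ hr.le
  calc infDist x γ ≤ dist x b₀ := infDist_le_dist_of_mem hb
  _ ≤ dist x 0 + dist 0 b₀ := dist_triangle x 0 b₀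
  _ ≤ R + ‖b₀‖ := by
      have hx' : dist x 0 ≤ R := by simpa [mem_closedBall] using hK hx
      have : dist (0 : E) b₀ = ‖b₀‖ := by simp [dist_comm]
      linarith

lemma integral_drop [IsFiniteMeasure μ] {f g : E → ℝ} (hf : Integrable f μ)
    (hg : Integrable g μ) {B : Set E} (hB : MeasurableSet B) {G : ℝ}
    (h_off : ∀ x ∉ B, g x ≤ f x) (h_on : ∀ x ∈ B, g x + G ≤ f x) :
    ∫ x, g x ∂μ + G * (μ B).toReal ≤ ∫ x, f x ∂μ := by
  have hfg : Integrable (fun x => f x - g x) μ := hf.sub hg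
  have h1 : (∫ x in B, (f x - g x) ∂μ) + ∫ x in Bᶜ, (f x - g x) ∂μ
      = ∫ x, (f x - g x) ∂μ := integral_add_compl hB hfg
  have h2 : 0 ≤ ∫ x in Bᶜ, (f x - g x) ∂μ :=
    setIntegral_nonneg hB.compl fun x hx => sub_nonneg.2 (h_off x hx)
  have h3 : G * (μ B).toReal ≤ ∫ x in B, (f x - g x) ∂μ := by
    have h := setIntegral_mono_on (f := fun _ => G) (g := fun x => f x - g x)
      (integrableOn_const (measure_lt_top μ B).ne)
      hfg.integrableOn hB (fun x hx => by linarith [h_on x hx])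
    rw [setIntegral_const, smul_eq_mul, measureReal_def] at h
    linarith [h]
  have h4 : ∫ x, (f x - g x) ∂μ = (∫ x, f x ∂μ) - ∫ x, g x ∂μ := integral_sub hf hg
  linarith

lemma one_le_three_rpow (hr : 0 < r) : (1 : ℝ) ≤ 3 ^ r := by
  calc (1 : ℝ) = 1 ^ r := (Real.one_rpow r).symm
  _ ≤ 3 ^ r := Real.rpow_le_rpow one_pos.le (by norm_num) hr.le

lemma gain [SecondCountableTopology E] [IsProbabilityMeasure μ]
    (hμ : IsAhlfors μ s0 ε0 C1 C2) (hr : 0 < r)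
    {R : ℝ} (hK : msupp μ ⊆ closedBall 0 R)
    {n : ℕ} {β : Finset E} (hne : β.Nonempty) (hcard : β.card < n)
    {x₀ : E} (hx₀ : x₀ ∈ msupp μ) {ρ : ℝ} (hρ : 0 < ρ) (hρε : ρ < ε0)
    (hfar : 4 * ρ ≤ infDist x₀ (β : Set E)) :
    quantErrPow μ r n + (3 ^ r - 1) * ρ ^ r * (C1 * ρ ^ s0)
      ≤ ∫ x, infDist x (β : Set E) ^ r ∂μ := by
  classical
  obtain ⟨b₀, hb₀⟩ := hne
  set γ : Finset E := insert x₀ β with hγdef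
  have hx₀γ : x₀ ∈ (γ : Set E) := by
    simp [hγdef]
  have hintβ : Integrable (fun x => infDist x (β : Set E) ^ r) μ :=
    integrable_infDist_rpow hr hK _ (Finset.mem_coe.2 hb₀)
  have hintγ : Integrable (fun x => infDist x (γ : Set E) ^ r) μ :=
    integrable_infDist_rpow hr hK _ hx₀γ
  have h0 : quantErrPow μ r n ≤ ∫ x, infDist x (γ : Set E) ^ r ∂μ :=
    quantErrPow_le ⟨x₀, by simp [hγdef]⟩
      (le_trans (Finset.card_insert_le _ _) hcard)
  have hdrop : (∫ x, infDist x (γ : Set E) ^ r ∂μ)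
      + ((3 * ρ) ^ r - ρ ^ r) * (μ (closedBall x₀ ρ)).toReal
      ≤ ∫ x, infDist x (β : Set E) ^ r ∂μ := by
    refine integral_drop hintβ hintγ measurableSet_closedBall ?_ ?_
    · intro x _
      apply Real.rpow_le_rpow infDist_nonneg _ hr.le
      exact infDist_le_infDist_of_subset (by simp [hγdef]) ⟨b₀, Finset.mem_coe.2 hb₀⟩
    · intro x hx
      rw [mem_closedBall] at hx
      have hγle : infDist x (γ : Set E) ^ r ≤ ρ ^ r := by
        apply Real.rpow_le_rpow infDist_nonneg _ hr.le
        exact le_trans (infDist_le_dist_of_mem hx₀γ) hx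
      have hβge : (3 * ρ) ^ r ≤ infDist x (β : Set E) ^ r := by
        apply Real.rpow_le_rpow (by positivity) _ hr.le
        have h1 : infDist x₀ (β : Set E) ≤ infDist x (β : Set E) + dist x₀ x :=
          infDist_le_infDist_add_dist
        rw [dist_comm] at h1
        linarith
      linarith
  have hball : C1 * ρ ^ s0 ≤ (μ (closedBall x₀ ρ)).toReal :=
    toReal_measure_closedBall_ge hμ hx₀ hρ hρε
  have hGpos : (3 * ρ) ^ r - ρ ^ r = (3 ^ r - 1) * ρ ^ r := by
    rw [Real.mul_rpow (by norm_num) hρ.le]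
    ring
  have hfinal : (3 ^ r - 1) * ρ ^ r * (C1 * ρ ^ s0)
      ≤ ((3 * ρ) ^ r - ρ ^ r) * (μ (closedBall x₀ ρ)).toReal := by
    rw [hGpos]
    apply mul_le_mul_of_nonneg_left hball
    apply mul_nonneg _ (Real.rpow_nonneg hρ.le r)
    linarith [one_le_three_rpow hr]
  linarith

end Stmt16Aux

-- Part 4: optimal set structure
namespace Stmt16Aux

variable {μ : Measure E} {r s0 ε0 C1 C2 : ℝ}

lemma exists_far_point [SecondCountableTopology E] [IsProbabilityMeasure μ]
    (hμ : IsAhlfors μ s0 ε0 C1 C2) {n : ℕ} {β : Finset E} (hβne : β.Nonempty)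
    (hcard : β.card ≤ n) :
    ∃ x₀ ∈ msupp μ,
      (1 / (2 * (n + 1) * C2)) ^ (1 / s0) ≤ infDist x₀ (β : Set E) := by
  obtain ⟨hs0, hε0, hC1, hC2, hloc, hglob⟩ := hμ
  set t : ℝ := (1 / (2 * (n + 1) * C2)) ^ (1 / s0) with htdef
  have hbase : (0:ℝ) < 1 / (2 * (n + 1) * C2) := by positivity
  have ht : 0 < t := Real.rpow_pos_of_pos hbase _
  have hts0 : t ^ s0 = 1 / (2 * (n + 1) * C2) := by
    rw [htdef, ← Real.rpow_mul hbase.le, one_div_mul_cancel hs0.ne', Real.rpow_one]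
  set U : Set E := ⋃ b ∈ β, closedBall b t with hUdef
  have hUmeas : MeasurableSet U :=
    Finset.measurableSet_biUnion β fun b _ => measurableSet_closedBall
  have hU : μ U ≤ ENNReal.ofReal (1 / 2) := by
    calc μ U ≤ ∑ b ∈ β, μ (closedBall b t) := measure_biUnion_finset_le β _
      _ ≤ ∑ _b ∈ β, ENNReal.ofReal (1 / (2 * (n + 1))) := by
          apply Finset.sum_le_sum
          intro b _
          have h := hglob b t ht
          have : C2 * t ^ s0 = 1 / (2 * (n + 1)) := by
            rw [hts0]; field_simp
          rwa [this] at h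
      _ = (β.card : ℝ≥0∞) * ENNReal.ofReal (1 / (2 * (n + 1))) := by
          rw [Finset.sum_const, nsmul_eq_mul]
      _ ≤ ((n : ℝ≥0∞) + 1) * ENNReal.ofReal (1 / (2 * (n + 1))) := by
          apply mul_le_mul_left
          exact_mod_cast le_trans (Nat.cast_le.2 hcard) (le_self_add)
      _ = ENNReal.ofReal ((n + 1) * (1 / (2 * (n + 1)))) := by
          rw [ENNReal.ofReal_mul (by positivity)]
          congr 1
          rw [ENNReal.ofReal_add (Nat.cast_nonneg n) zero_le_one]
          simp
      _ = ENNReal.ofReal (1 / 2) := by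
          congr 1
          field_simp
  have hUc : μ Uᶜ ≠ 0 := by
    intro h0
    have h1 : (1 : ℝ≥0∞) = μ U + μ Uᶜ := by
      rw [measure_add_measure_compl hUmeas, measure_univ]
    rw [h0, add_zero] at h1
    have h2 : (ENNReal.ofReal (1/2)) < 1 := ENNReal.ofReal_lt_one.2 (by norm_num)
    rw [h1] at h2
    exact absurd hU (not_le.2 h2)
  obtain ⟨x₀, hx₀U, hx₀K⟩ := nonempty_inter_msupp hUc
  refine ⟨x₀, hx₀K, ?_⟩
  by_contra hlt
  rw [not_le] at hlt
  have hβne' : ((β : Set E)).Nonempty := by exact_mod_cast hβne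
  obtain ⟨b, hb, hdb⟩ := (infDist_lt_iff hβne').1 hlt
  exact hx₀U (mem_biUnion (Finset.mem_coe.1 hb) (mem_closedBall.2 hdb.le))

lemma optimal_strict [SecondCountableTopology E] [IsProbabilityMeasure μ]
    (hμ : IsAhlfors μ s0 ε0 C1 C2) (hr : 0 < r) {R : ℝ} (hK : msupp μ ⊆ closedBall 0 R)
    {n : ℕ} {β : Finset E} (hβne : β.Nonempty) (hcard : β.card < n) :
    quantErrPow μ r n < ∫ x, infDist x (β : Set E) ^ r ∂μ := by
  obtain ⟨x₀, hx₀K, hfar⟩ := exists_far_point hμ hβne hcard.le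
  set t : ℝ := (1 / (2 * (n + 1) * C2)) ^ (1 / s0) with htdef
  have hC2' : 0 < C2 := hμ.2.2.2.1
  have ht : 0 < t := Real.rpow_pos_of_pos (by positivity) _
  have hε0 := hμ.2.1
  set ρ : ℝ := min (t / 4) (ε0 / 2) with hρdef
  have hρ : 0 < ρ := lt_min (by linarith) (by linarith)
  have hρε : ρ < ε0 := lt_of_le_of_lt (min_le_right _ _) (by linarith)
  have hfar' : 4 * ρ ≤ infDist x₀ (β : Set E) := by
    have : 4 * ρ ≤ 4 * (t / 4) := by
      have := min_le_left (t / 4) (ε0 / 2); linarith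
    linarith [hfar]
  have hgain := gain hμ hr hK hβne hcard hx₀K hρ hρε hfar'
  have hpos : 0 < (3 ^ r - 1) * ρ ^ r * (C1 * ρ ^ s0) := by
    have h31 : (1:ℝ) < 3 ^ r :=
      (Real.one_lt_rpow_iff_of_pos (by norm_num)).2 (Or.inl ⟨by norm_num, hr⟩)
    have hC1' := hμ.2.2.1
    have hρr : (0:ℝ) < ρ ^ r := Real.rpow_pos_of_pos hρ _
    have hρs : (0:ℝ) < ρ ^ s0 := Real.rpow_pos_of_pos hρ _
    exact mul_pos (mul_pos (by linarith) hρr) (mul_pos hC1' hρs)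
  linarith

lemma optimal_props [SecondCountableTopology E] [IsProbabilityMeasure μ]
    (hμ : IsAhlfors μ s0 ε0 C1 C2) (hr : 0 < r) {R : ℝ} (hK : msupp μ ⊆ closedBall 0 R)
    {n : ℕ} (hn : 2 ≤ n) {α : Finset E} (hopt : IsOptimalSet μ r n α)
    {P : E → Set E} (hP : IsVoronoiPartition α P) :
    α.card = n ∧ ∀ a ∈ α, μ (P a) ≠ 0 := by
  classical
  obtain ⟨hαne, hαcard, hαint⟩ := hopt
  have hcard : α.card = n := by
    by_contra h
    have hlt : α.card < n := lt_of_le_of_ne hαcard h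
    have := optimal_strict hμ hr hK hαne hlt
    rw [hαint] at this
    exact lt_irrefl _ this
  refine ⟨hcard, fun a ha hzero => ?_⟩
  -- the erased set
  have h2 : 1 < α.card := by omega
  have herase_ne : (α.erase a).Nonempty := by
    rw [← Finset.card_pos, Finset.card_erase_of_mem ha]
    omega
  have herase_card : (α.erase a).card < n := by
    rw [Finset.card_erase_of_mem ha, hcard]
    omega
  -- a.e. equality of integrands
  have hsub : {x : E | infDist x ((α.erase a : Finset E) : Set E) ^ r
      ≠ infDist x (α : Set E) ^ r} ⊆ P a := by
    intro x hx
    by_contra hxPa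
    apply hx
    have hxU : x ∈ ⋃ b ∈ α, P b := by rw [hP.2.1]; trivial
    obtain ⟨b, hb, hxb⟩ := by
      simpa only [mem_iUnion, exists_prop] using hxU
    have hba : b ≠ a := fun h => hxPa (h ▸ hxb)
    have hdeq : dist x b = infDist x (α : Set E) := hP.2.2.2.2 b hb hxb
    have hle1 : infDist x (α : Set E) ≤ infDist x ((α.erase a : Finset E) : Set E) :=
      infDist_le_infDist_of_subset (by exact_mod_cast Finset.erase_subset a α)
        (by exact_mod_cast herase_ne.to_set)
    have hle2 : infDist x ((α.erase a : Finset E) : Set E) ≤ infDist x (α : Set E) := by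
      rw [← hdeq]
      exact infDist_le_dist_of_mem
        (Finset.mem_coe.2 (Finset.mem_erase.2 ⟨hba, hb⟩))
    rw [le_antisymm hle2 hle1]
  have hae : (fun x => infDist x ((α.erase a : Finset E) : Set E) ^ r)
      =ᵐ[μ] (fun x => infDist x (α : Set E) ^ r) := by
    rw [Filter.EventuallyEq, ae_iff]
    exact measure_mono_null (fun x hx => hsub hx) hzero
  have heq : (∫ x, infDist x ((α.erase a : Finset E) : Set E) ^ r ∂μ)
      = ∫ x, infDist x (α : Set E) ^ r ∂μ := integral_congr_ae hae
  have := optimal_strict hμ hr hK herase_ne herase_card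
  rw [heq, hαint] at this
  exact lt_irrefl _ this

end Stmt16Aux

-- Part 5: packing, nets
namespace Stmt16Aux

variable {μ : Measure E} {r s0 ε0 C1 C2 : ℝ}

lemma packing_one {K : Set E} (hK : K.Nonempty) (ρ : ℝ) : PackingNum K ρ 1 := by
  obtain ⟨x, hx⟩ := hK
  exact ⟨fun _ => x, fun _ => hx, fun i j hij => absurd (Subsingleton.elim i j) hij⟩

lemma net_of_greatest {K : Set E} {ρ : ℝ} (hρ : 0 < ρ) {N : ℕ}
    (hg : IsGreatest {j | PackingNum K ρ j} N) :
    ∃ cf : Fin N → E, (∀ i, cf i ∈ K) ∧ ∀ x ∈ K, ∃ i, dist x (cf i) ≤ 2 * ρ := by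
  classical
  obtain ⟨cf, hcK, hdisj⟩ := hg.1
  refine ⟨cf, hcK, fun x hx => ?_⟩
  by_contra hfar
  push_neg at hfar
  have hpack : PackingNum K ρ (N + 1) := by
    refine ⟨Fin.snoc cf x, ?_, ?_⟩
    · intro i
      rcases eq_or_ne i (Fin.last N) with hi | hi
      · rw [hi, Fin.snoc_last]; exact hx
      · obtain ⟨j, rfl⟩ := Fin.exists_castSucc_eq.2 hi
        rw [Fin.snoc_castSucc]; exact hcK j
    · have hxd : ∀ j : Fin N, Disjoint (closedBall x ρ) (closedBall (cf j) ρ) := by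
        intro j
        apply closedBall_disjoint_closedBall
        have := hfar j
        linarith
      intro i j hij
      rcases eq_or_ne i (Fin.last N) with hi | hi
      · rcases eq_or_ne j (Fin.last N) with hj | hj
        · exact absurd (hi.trans hj.symm) hij
        · obtain ⟨j', rfl⟩ := Fin.exists_castSucc_eq.2 hj
          rw [hi, Fin.snoc_last, Fin.snoc_castSucc]
          exact hxd j'
      · obtain ⟨i', rfl⟩ := Fin.exists_castSucc_eq.2 hi
        rcases eq_or_ne j (Fin.last N) with hj | hj
        · rw [hj, Fin.snoc_last, Fin.snoc_castSucc]
          exact (hxd i').symm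
        · obtain ⟨j', rfl⟩ := Fin.exists_castSucc_eq.2 hj
          rw [Fin.snoc_castSucc, Fin.snoc_castSucc]
          exact hdisj (fun h => hij (by rw [h]))
  have := hg.2 hpack
  omega

lemma quantErrPow_le_net [SecondCountableTopology E] [IsProbabilityMeasure μ]
    (hr : 0 < r) {R : ℝ} (hK : msupp μ ⊆ closedBall 0 R) {ρ : ℝ} (hρ : 0 < ρ) {N n : ℕ}
    (hg : IsGreatest {j | PackingNum (msupp μ) ρ j} N) (hn : N ≤ n) :
    quantErrPow μ r n ≤ (2 * ρ) ^ r := by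
  classical
  obtain ⟨cf, hcK, hnet⟩ := net_of_greatest hρ hg
  have hN1 : 1 ≤ N := hg.2 (packing_one (msupp_nonempty μ) ρ)
  haveI : Nonempty (Fin N) := ⟨⟨0, by omega⟩⟩
  set β : Finset E := Finset.image cf Finset.univ with hβdef
  have hβmem : ∀ i, cf i ∈ β := fun i => Finset.mem_image.2 ⟨i, Finset.mem_univ _, rfl⟩
  have hβne : β.Nonempty := ⟨cf (Classical.arbitrary _), hβmem _⟩
  have hβcard : β.card ≤ n :=
    le_trans (le_trans Finset.card_image_le (by simp)) hn
  have h1 : quantErrPow μ r n ≤ ∫ x, infDist x (β : Set E) ^ r ∂μ :=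
    quantErrPow_le hβne hβcard
  have hint : Integrable (fun x => infDist x (β : Set E) ^ r) μ :=
    integrable_infDist_rpow hr hK _ (Finset.mem_coe.2 (hβmem (Classical.arbitrary _)))
  have h2 : (∫ x, infDist x (β : Set E) ^ r ∂μ) ≤ ∫ _x, (2 * ρ) ^ r ∂μ := by
    apply integral_mono_ae hint (integrable_const _)
    filter_upwards [ae_mem_msupp μ] with x hx
    obtain ⟨i, hi⟩ := hnet x hx
    apply Real.rpow_le_rpow infDist_nonneg _ hr.le
    exact le_trans (infDist_le_dist_of_mem (Finset.mem_coe.2 (hβmem i))) hi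
  have h3 : (∫ _x, (2 * ρ) ^ r ∂μ) = (2 * ρ) ^ r := by
    simp [integral_const]
  linarith

end Stmt16Aux

-- Part 6: weak covering bound
namespace Stmt16Aux

lemma rpow_root_le {x y p : ℝ} (hx : 0 ≤ x) (hp : 0 < p) (h : x ^ p ≤ y) :
    x ≤ y ^ (1 / p) := by
  calc x = (x ^ p) ^ (1 / p) := by
        rw [← Real.rpow_mul hx, mul_one_div, div_self hp.ne', Real.rpow_one]
  _ ≤ y ^ (1 / p) := Real.rpow_le_rpow (Real.rpow_nonneg hx p) h (by positivity)

variable {μ : Measure E} {r s0 ε0 C1 C2 : ℝ}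

lemma weak_bound [SecondCountableTopology E] [IsProbabilityMeasure μ]
    (hμ : IsAhlfors μ s0 ε0 C1 C2) (hr : 0 < r) {R : ℝ} (hK : msupp μ ⊆ closedBall 0 R)
    {η : ℝ} (hη : 0 < η) {α : Finset E} (hαne : α.Nonempty)
    (hEr : (∫ x, infDist x (α : Set E) ^ r ∂μ) ≤ (2 * η) ^ r)
    (hσ : ((2 * η) ^ r / C1) ^ (1 / (s0 + r)) < ε0 / 2)
    {x₀ : E} (hx₀ : x₀ ∈ msupp μ) :
    infDist x₀ (α : Set E) ≤ 2 * ((2 * η) ^ r / C1) ^ (1 / (s0 + r)) := by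
  obtain ⟨hs0, hε0, hC1, hC2, hloc, hglob⟩ := hμ
  set σ : ℝ := ((2 * η) ^ r / C1) ^ (1 / (s0 + r)) with hσdef
  have hσpos : 0 < σ := Real.rpow_pos_of_pos (by positivity) _
  set δ : ℝ := infDist x₀ (α : Set E) with hδdef
  rcases le_or_gt δ (2 * σ) with h | h
  · exact h
  have hδpos : 0 < δ := lt_trans (by positivity) h
  set s : ℝ := min (δ / 2) (ε0 / 2) with hsdef
  have hs : 0 < s := lt_min (by linarith) (by linarith)
  have hsε : s < ε0 := lt_of_le_of_lt (min_le_right _ _) (by linarith)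
  have hsδ : s ≤ δ / 2 := min_le_left _ _
  -- lower bound for the integral
  have hαne' : ((α : Set E)).Nonempty := by exact_mod_cast hαne
  obtain ⟨a₀, ha₀⟩ := hαne'
  have hint : Integrable (fun x => infDist x (α : Set E) ^ r) μ :=
    integrable_infDist_rpow hr hK _ ha₀
  have hlow : C1 * s ^ s0 * (δ / 2) ^ r ≤ ∫ x, infDist x (α : Set E) ^ r ∂μ := by
    have h1 : (∫ x in closedBall x₀ s, infDist x (α : Set E) ^ r ∂μ)
        ≤ ∫ x, infDist x (α : Set E) ^ r ∂μ :=
      setIntegral_le_integral hint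
        (Filter.Eventually.of_forall fun x => Real.rpow_nonneg infDist_nonneg r)
    have h2 : (∫ _x in closedBall x₀ s, (δ / 2) ^ r ∂μ)
        ≤ ∫ x in closedBall x₀ s, infDist x (α : Set E) ^ r ∂μ := by
      apply setIntegral_mono_on
        (integrableOn_const (measure_lt_top μ _).ne)
        hint.integrableOn measurableSet_closedBall
      intro x hx
      rw [mem_closedBall] at hx
      apply Real.rpow_le_rpow (by linarith) _ hr.le
      have h3 : δ ≤ infDist x (α : Set E) + dist x₀ x := infDist_le_infDist_add_dist
      rw [dist_comm] at hx
      linarith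
    have h4 : (∫ _x in closedBall x₀ s, (δ / 2) ^ r ∂μ)
        = (μ (closedBall x₀ s)).toReal * (δ / 2) ^ r := by
      rw [setIntegral_const, smul_eq_mul, measureReal_def]
    have h5 : C1 * s ^ s0 ≤ (μ (closedBall x₀ s)).toReal :=
      toReal_measure_closedBall_ge ⟨hs0, hε0, hC1, hC2, hloc, hglob⟩ hx₀ hs hsε
    have h6 : C1 * s ^ s0 * (δ / 2) ^ r ≤ (μ (closedBall x₀ s)).toReal * (δ / 2) ^ r :=
      mul_le_mul_of_nonneg_right h5 (Real.rpow_nonneg (by linarith) r)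
    linarith
  -- the case s = ε0/2 is impossible
  rcases min_cases (δ / 2) (ε0 / 2) with ⟨hmin, hc⟩ | ⟨hmin, hc⟩
  · -- s = δ/2
    rw [hsdef, hmin] at hlow hs
    have key : (δ / 2) ^ (s0 + r) ≤ (2 * η) ^ r / C1 := by
      rw [Real.rpow_add hs]
      rw [le_div_iff₀ hC1]
      calc (δ / 2) ^ s0 * (δ / 2) ^ r * C1
          = C1 * (δ / 2) ^ s0 * (δ / 2) ^ r := by ring
        _ ≤ _ := le_trans hlow hEr
    have := rpow_root_le (by linarith) (by linarith) key
    rw [← hσdef] at this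
    linarith
  · -- s = ε0/2, but then ε0/2 ≤ δ/2 and we contradict hσ
    rw [hsdef, hmin] at hlow hs
    have key : (ε0 / 2) ^ (s0 + r) ≤ (2 * η) ^ r / C1 := by
      rw [Real.rpow_add hs]
      rw [le_div_iff₀ hC1]
      have hmono : (ε0 / 2) ^ r ≤ (δ / 2) ^ r :=
        Real.rpow_le_rpow (by linarith) (by linarith) hr.le
      have hnn : 0 ≤ C1 * (ε0 / 2) ^ s0 := by
        have := Real.rpow_nonneg (le_of_lt hs) s0
        positivity
      calc (ε0 / 2) ^ s0 * (ε0 / 2) ^ r * C1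
          = C1 * (ε0 / 2) ^ s0 * (ε0 / 2) ^ r := by ring
        _ ≤ C1 * (ε0 / 2) ^ s0 * (δ / 2) ^ r := mul_le_mul_of_nonneg_left hmono hnn
        _ ≤ _ := le_trans hlow hEr
    have := rpow_root_le (by linarith) (by linarith) key
    rw [← hσdef] at this
    linarith

end Stmt16Aux

-- Part 7: covering radius of optimal sets
namespace Stmt16Aux

variable {μ : Measure E} {r s0 ε0 C1 C2 : ℝ}

lemma infDist_erase_eq [DecidableEq E] {α : Finset E} {P : E → Set E} (hP : IsVoronoiPartition α P)
    {a : E} (ha : a ∈ α) (herase : (α.erase a).Nonempty) {x : E} (hx : x ∉ P a) :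
    infDist x ((α.erase a : Finset E) : Set E) = infDist x (α : Set E) := by
  have hxU : x ∈ ⋃ b ∈ α, P b := by rw [hP.2.1]; trivial
  obtain ⟨b, hb, hxb⟩ := by simpa only [mem_iUnion, exists_prop] using hxU
  have hba : b ≠ a := fun h => hx (h ▸ hxb)
  have hdeq : dist x b = infDist x (α : Set E) := hP.2.2.2.2 b hb hxb
  have hle1 : infDist x (α : Set E) ≤ infDist x ((α.erase a : Finset E) : Set E) :=
    infDist_le_infDist_of_subset (by exact_mod_cast Finset.erase_subset a α)
      (by exact_mod_cast herase)
  have hle2 : infDist x ((α.erase a : Finset E) : Set E) ≤ infDist x (α : Set E) := by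
    rw [← hdeq]
    exact infDist_le_dist_of_mem (Finset.mem_coe.2 (Finset.mem_erase.2 ⟨hba, hb⟩))
  exact le_antisymm hle2 hle1

lemma covering_radius [SecondCountableTopology E] [IsProbabilityMeasure μ]
    (hμ : IsAhlfors μ s0 ε0 C1 C2) (hr : 0 < r) {R : ℝ} (hK : msupp μ ⊆ closedBall 0 R)
    {η : ℝ} (hη : 0 < η) {N n c : ℕ}
    (hg : IsGreatest {j | PackingNum (msupp μ) η j} N)
    (hc2 : 2 ≤ c) (hcB : 4 ^ (s0 + r) * C2 / (C1 * (3 ^ r - 1)) * 3 ^ s0 * 5 ^ r < (c : ℝ))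
    (hn : c * N ≤ n)
    (hσ : ((2 * η) ^ r / C1) ^ (1 / (s0 + r)) < ε0 / 2)
    {α : Finset E} (hopt : IsOptimalSet μ r n α)
    {P : E → Set E} (hP : IsVoronoiPartition α P) :
    ∀ x ∈ msupp μ, infDist x (α : Set E) ≤ 2 * η := by
  classical
  have hs0 : 0 < s0 := hμ.1
  have hε0 : 0 < ε0 := hμ.2.1
  have hC1 : 0 < C1 := hμ.2.2.1
  have hC2 : 0 < C2 := hμ.2.2.2.1
  have h31 : (1:ℝ) < 3 ^ r :=
    (Real.one_lt_rpow_iff_of_pos (by norm_num)).2 (Or.inl ⟨by norm_num, hr⟩)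
  have hN1 : 1 ≤ N := hg.2 (packing_one (msupp_nonempty μ) η)
  have hNn : N ≤ n := le_trans (by nlinarith) hn
  have hn2 : 2 ≤ n := le_trans (by nlinarith) hn
  have hEn : (∫ x, infDist x (α : Set E) ^ r ∂μ) = quantErrPow μ r n := hopt.2.2
  have hEr : (∫ x, infDist x (α : Set E) ^ r ∂μ) ≤ (2 * η) ^ r := by
    rw [hEn]; exact quantErrPow_le_net hr hK hη hg hNn
  obtain ⟨hcard, hpos⟩ := optimal_props hμ hr hK hn2 hopt hP
  set σ : ℝ := ((2 * η) ^ r / C1) ^ (1 / (s0 + r)) with hσdef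
  have hσpos : 0 < σ := Real.rpow_pos_of_pos (by positivity) _
  have hweak : ∀ x ∈ msupp μ, infDist x (α : Set E) ≤ 2 * σ := fun x hx =>
    weak_bound hμ hr hK hη hopt.1 hEr hσ hx
  -- the covering radius δ
  have hKne := msupp_nonempty μ
  set S : Set ℝ := (fun x => infDist x (α : Set E)) '' msupp μ with hSdef
  have hSne : S.Nonempty := hKne.image _
  have hSbdd : BddAbove S := ⟨2 * σ, by rintro y ⟨x, hx, rfl⟩; exact hweak x hx⟩
  set δ : ℝ := sSup S with hδdef
  have hδub : ∀ x ∈ msupp μ, infDist x (α : Set E) ≤ δ := fun x hx =>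
    le_csSup hSbdd ⟨x, hx, rfl⟩
  have hδle : δ ≤ 2 * σ := csSup_le hSne (by rintro y ⟨x, hx, rfl⟩; exact hweak x hx)
  have hδ0 : 0 ≤ δ := le_trans infDist_nonneg (hδub _ hKne.choose_spec)
  -- the net
  obtain ⟨cf, hcfK, hnet⟩ := net_of_greatest hη hg
  haveI : Nonempty (Fin N) := ⟨⟨0, by omega⟩⟩
  have hsel : ∀ a : E, ∃ i : Fin N, a ∈ α → dist a (cf i) ≤ 2 * η + δ := by
    intro a
    by_cases ha : a ∈ α
    · obtain ⟨x, hx1, hx2⟩ := nonempty_inter_msupp (hpos a ha)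
      obtain ⟨i, hi⟩ := hnet x hx2
      refine ⟨i, fun _ => ?_⟩
      have hda : dist x a = infDist x (α : Set E) := hP.2.2.2.2 a ha hx1
      have : infDist x (α : Set E) ≤ δ := hδub x hx2
      calc dist a (cf i) ≤ dist a x + dist x (cf i) := dist_triangle _ _ _
        _ ≤ 2 * η + δ := by rw [dist_comm] at hda; linarith [hda ▸ this]
    · exact ⟨Classical.arbitrary _, fun h => absurd h ha⟩
  choose ι hι using hsel
  -- pigeonhole
  have hcount : (Finset.univ : Finset (Fin N)).card * c ≤ α.card := by
    rw [Finset.card_univ, Fintype.card_fin, hcard]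
    calc N * c = c * N := Nat.mul_comm _ _
      _ ≤ n := hn
  obtain ⟨i₀, -, hF⟩ := Finset.exists_le_card_fiber_of_mul_le_card_of_maps_to
    (fun a _ => Finset.mem_univ (ι a)) ⟨Classical.arbitrary _, Finset.mem_univ _⟩ hcount
  set F : Finset E := α.filter (fun a => ι a = i₀) with hFdef
  have hFsub : F ⊆ α := Finset.filter_subset _ _
  have hFball : ∀ a ∈ F, dist a (cf i₀) ≤ 2 * η + δ := by
    intro a haF
    obtain ⟨haα, hai⟩ := Finset.mem_filter.1 haF
    exact hai ▸ hι a haα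
  have hF2 : 2 ≤ F.card := le_trans hc2 hF
  have hFne : F.Nonempty := Finset.card_pos.1 (by omega)
  obtain ⟨a', ha'F, hmin⟩ := Finset.exists_min_image F (fun a => μ (P a)) hFne
  obtain ⟨a'', ha''F, ha''ne⟩ := Finset.exists_mem_ne (s := F) (by omega) a'
  have ha'α : a' ∈ α := hFsub ha'F
  have ha''α : a'' ∈ α := hFsub ha''F
  have hd12 : dist a' a'' ≤ 2 * (2 * η + δ) := by
    calc dist a' a'' ≤ dist a' (cf i₀) + dist a'' (cf i₀) := dist_triangle_right _ _ _
      _ ≤ 2 * (2 * η + δ) := by linarith [hFball a' ha'F, hFball a'' ha''F]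
  -- mass bound for the cheapest cell
  have hPa' : (c : ℝ) * (μ (P a')).toReal ≤ C2 * (2 * η + 2 * δ) ^ s0 := by
    have hcell : ∀ a ∈ F, P a ∩ msupp μ ⊆ closedBall (cf i₀) (2 * η + 2 * δ) := by
      intro a haF x ⟨hx1, hx2⟩
      have hda : dist x a = infDist x (α : Set E) := hP.2.2.2.2 a (hFsub haF) hx1
      have h1 : infDist x (α : Set E) ≤ δ := hδub x hx2
      rw [mem_closedBall]
      calc dist x (cf i₀) ≤ dist x a + dist a (cf i₀) := dist_triangle _ _ _
        _ ≤ 2 * η + 2 * δ := by linarith [hFball a haF, hda ▸ h1]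
    have hdisjF : (F : Set E).PairwiseDisjoint (fun a => P a ∩ msupp μ) := by
      intro a ha b hb hab
      exact Disjoint.mono inter_subset_left inter_subset_left
        (hP.2.2.1 a (hFsub ha) b (hFsub hb) hab)
    have hmeas : ∀ a ∈ F, MeasurableSet (P a ∩ msupp μ) := fun a ha =>
      (hP.1 a (hFsub ha)).inter (isClosed_msupp μ).measurableSet
    have hsum : (F.card : ℝ≥0∞) * μ (P a') ≤ μ (closedBall (cf i₀) (2 * η + 2 * δ)) := by
      calc (F.card : ℝ≥0∞) * μ (P a') = F.card • μ (P a') := (nsmul_eq_mul _ _).symm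
        _ ≤ ∑ a ∈ F, μ (P a) := Finset.card_nsmul_le_sum F _ _ hmin
        _ = ∑ a ∈ F, μ (P a ∩ msupp μ) := by
            exact Finset.sum_congr rfl fun a _ => (measure_inter_msupp μ (P a)).symm
        _ = μ (⋃ a ∈ F, (P a ∩ msupp μ)) := (measure_biUnion_finset hdisjF hmeas).symm
        _ ≤ μ (closedBall (cf i₀) (2 * η + 2 * δ)) :=
            measure_mono (iUnion₂_subset hcell)
    have hc' : (c : ℝ≥0∞) * μ (P a') ≤ ENNReal.ofReal (C2 * (2 * η + 2 * δ) ^ s0) := by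
      refine le_trans (le_trans ?_ hsum) (hμ.2.2.2.2.2 _ _ (by linarith))
      exact mul_le_mul_left (by exact_mod_cast hF) _
    have h2 := ENNReal.toReal_le_of_le_ofReal
      (mul_nonneg hC2.le (Real.rpow_nonneg (by linarith) s0)) hc'
    rwa [ENNReal.toReal_mul, ENNReal.toReal_natCast] at h2
  -- the key local estimate
  have herase_ne : (α.erase a').Nonempty := by
    rw [← Finset.card_pos, Finset.card_erase_of_mem ha'α, hcard]; omega
  have ha''er : a'' ∈ (α.erase a') := Finset.mem_erase.2 ⟨ha''ne, ha''α⟩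
  have hint_α : Integrable (fun x => infDist x (α : Set E) ^ r) μ :=
    integrable_infDist_rpow hr hK _ (Finset.mem_coe.2 ha'α)
  have hint_er : Integrable (fun x => infDist x ((α.erase a' : Finset E) : Set E) ^ r) μ :=
    integrable_infDist_rpow hr hK _ (Finset.mem_coe.2 ha''er)
  have hP1 : (0:ℝ) < 3 ^ r - 1 := by linarith
  have hc0 : (0:ℝ) < (c:ℝ) := by exact_mod_cast lt_of_lt_of_le (by norm_num) hc2
  have hkey : ∀ x₀ ∈ msupp μ, C1 * (3 ^ r - 1) * (infDist x₀ (α : Set E) / 4) ^ (s0 + r)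
      ≤ (3 * δ + 4 * η) ^ r * (μ (P a')).toReal := by
    intro x₀ hx₀
    set d : ℝ := infDist x₀ (α : Set E) with hddef
    have hRHS0 : 0 ≤ (3 * δ + 4 * η) ^ r * (μ (P a')).toReal :=
      mul_nonneg (Real.rpow_nonneg (by linarith) r) ENNReal.toReal_nonneg
    rcases lt_or_ge 0 d with hd0 | hd0'
    case inr =>
      have hd0 : d = 0 := le_antisymm hd0' infDist_nonneg
      rw [hd0, zero_div, Real.zero_rpow (by positivity : (0:ℝ) < s0 + r).ne', mul_zero]
      exact hRHS0
    case inl =>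
      set t : ℝ := d / 4 with htdef
      have ht : 0 < t := by rw [htdef]; linarith
      have hd2σ : d ≤ 2 * σ := hweak x₀ hx₀
      have htε : t < ε0 := by rw [htdef]; linarith
      set β : Finset E := insert x₀ (α.erase a') with hβdef
      have hx₀β : x₀ ∈ (β : Set E) := by simp [hβdef]
      have hβne : β.Nonempty := ⟨x₀, by simp [hβdef]⟩
      have hβcard : β.card ≤ n := by
        calc β.card ≤ (α.erase a').card + 1 := Finset.card_insert_le _ _
          _ ≤ n := by rw [Finset.card_erase_of_mem ha'α, hcard]; omega
      have hint_β : Integrable (fun x => infDist x (β : Set E) ^ r) μ :=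
        integrable_infDist_rpow hr hK _ hx₀β
      have h1 : quantErrPow μ r n ≤ ∫ x, infDist x (β : Set E) ^ r ∂μ :=
        quantErrPow_le hβne hβcard
      have hdrop : (∫ x, infDist x (β : Set E) ^ r ∂μ)
          + ((3 * t) ^ r - t ^ r) * (μ (closedBall x₀ t)).toReal
          ≤ ∫ x, infDist x ((α.erase a' : Finset E) : Set E) ^ r ∂μ := by
        refine integral_drop hint_er hint_β measurableSet_closedBall ?_ ?_
        · intro x _
          apply Real.rpow_le_rpow infDist_nonneg _ hr.le
          apply infDist_le_infDist_of_subset _ (by exact_mod_cast herase_ne)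
          exact_mod_cast Finset.subset_insert _ _
        · intro x hx
          rw [mem_closedBall] at hx
          have hb1 : infDist x (β : Set E) ^ r ≤ t ^ r :=
            Real.rpow_le_rpow infDist_nonneg
              (le_trans (infDist_le_dist_of_mem hx₀β) hx) hr.le
          have hb2 : (3 * t) ^ r ≤ infDist x ((α.erase a' : Finset E) : Set E) ^ r := by
            apply Real.rpow_le_rpow (by linarith) _ hr.le
            have h3' : infDist x (α : Set E)
                ≤ infDist x ((α.erase a' : Finset E) : Set E) :=
              infDist_le_infDist_of_subset
                (by exact_mod_cast Finset.erase_subset _ _) (by exact_mod_cast herase_ne)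
            have h4 : d ≤ infDist x (α : Set E) + dist x₀ x :=
              infDist_le_infDist_add_dist
            rw [dist_comm] at h4
            have hd4 : d = 4 * t := by rw [htdef]; ring
            linarith
          linarith
      have h3 : (∫ x, infDist x ((α.erase a' : Finset E) : Set E) ^ r ∂μ)
          ≤ (∫ x, infDist x (α : Set E) ^ r ∂μ)
            + (3 * δ + 4 * η) ^ r * (μ (P a')).toReal := by
        have hind : Integrable
            (fun x => (P a').indicator (fun _ => (3 * δ + 4 * η) ^ r) x) μ :=
          (integrable_const _).indicator (hP.1 a' ha'α)
        have hmono : (fun x => infDist x ((α.erase a' : Finset E) : Set E) ^ r)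
            ≤ᵐ[μ] fun x => infDist x (α : Set E) ^ r
              + (P a').indicator (fun _ => (3 * δ + 4 * η) ^ r) x := by
          filter_upwards [ae_mem_msupp μ] with x hx
          by_cases hxP : x ∈ P a'
          · rw [indicator_of_mem hxP]
            have hxa' : dist x a' ≤ δ := by
              rw [hP.2.2.2.2 a' ha'α hxP]
              exact hδub x hx
            have h5 : infDist x ((α.erase a' : Finset E) : Set E) ≤ 3 * δ + 4 * η := by
              calc infDist x ((α.erase a' : Finset E) : Set E) ≤ dist x a'' :=
                    infDist_le_dist_of_mem (Finset.mem_coe.2 ha''er)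
                _ ≤ dist x a' + dist a' a'' := dist_triangle _ _ _
                _ ≤ 3 * δ + 4 * η := by linarith [hd12]
            have h6 : infDist x ((α.erase a' : Finset E) : Set E) ^ r
                ≤ (3 * δ + 4 * η) ^ r :=
              Real.rpow_le_rpow infDist_nonneg h5 hr.le
            have h7 : (0:ℝ) ≤ infDist x (α : Set E) ^ r :=
              Real.rpow_nonneg infDist_nonneg r
            linarith
          · rw [indicator_of_notMem hxP, add_zero,
              infDist_erase_eq hP ha'α herase_ne hxP]
        calc (∫ x, infDist x ((α.erase a' : Finset E) : Set E) ^ r ∂μ)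
            ≤ ∫ x, (infDist x (α : Set E) ^ r
                + (P a').indicator (fun _ => (3 * δ + 4 * η) ^ r) x) ∂μ :=
              integral_mono_ae hint_er (hint_α.add hind) hmono
          _ = (∫ x, infDist x (α : Set E) ^ r ∂μ)
                + ∫ x, (P a').indicator (fun _ => (3 * δ + 4 * η) ^ r) x ∂μ :=
              integral_add hint_α hind
          _ = (∫ x, infDist x (α : Set E) ^ r ∂μ)
                + (3 * δ + 4 * η) ^ r * (μ (P a')).toReal := by
              rw [integral_indicator_const _ (hP.1 a' ha'α), smul_eq_mul, measureReal_def, mul_comm]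
      have hchain : ((3 * t) ^ r - t ^ r) * (μ (closedBall x₀ t)).toReal
          ≤ (3 * δ + 4 * η) ^ r * (μ (P a')).toReal := by
        rw [hEn] at h3
        linarith
      have hball : C1 * t ^ s0 ≤ (μ (closedBall x₀ t)).toReal :=
        toReal_measure_closedBall_ge hμ hx₀ ht htε
      have hGt : (3 * t) ^ r - t ^ r = (3 ^ r - 1) * t ^ r := by
        rw [Real.mul_rpow (by norm_num) ht.le]; ring
      have hfin : C1 * (3 ^ r - 1) * t ^ (s0 + r)
          ≤ (3 * δ + 4 * η) ^ r * (μ (P a')).toReal := by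
        rw [Real.rpow_add ht]
        calc C1 * (3 ^ r - 1) * (t ^ s0 * t ^ r)
            = ((3 ^ r - 1) * t ^ r) * (C1 * t ^ s0) := by ring
          _ ≤ ((3 ^ r - 1) * t ^ r) * (μ (closedBall x₀ t)).toReal := by
              apply mul_le_mul_of_nonneg_left hball
              have := Real.rpow_nonneg ht.le r
              nlinarith
          _ = ((3 * t) ^ r - t ^ r) * (μ (closedBall x₀ t)).toReal := by rw [hGt]
          _ ≤ _ := hchain
      exact hfin
  -- conclude that the covering radius is at most 2η
  have hδ2η : δ ≤ 2 * η := by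
    by_contra hgt
    push_neg at hgt
    have hδpos : 0 < δ := lt_trans (by positivity) hgt
    set W : ℝ := ((3 * δ + 4 * η) ^ r * (μ (P a')).toReal) / (C1 * (3 ^ r - 1))
      with hWdef
    have hW0 : 0 ≤ W := div_nonneg
      (mul_nonneg (Real.rpow_nonneg (by linarith) r) ENNReal.toReal_nonneg)
      (mul_pos hC1 hP1).le
    have hup : δ ≤ 4 * W ^ (1 / (s0 + r)) := by
      apply csSup_le hSne
      rintro y ⟨x, hx, rfl⟩
      have h8 := hkey x hx
      have h9 : (infDist x (α : Set E) / 4) ^ (s0 + r) ≤ W := by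
        rw [hWdef, le_div_iff₀ (mul_pos hC1 hP1)]
        linarith
      have h10 := rpow_root_le (div_nonneg infDist_nonneg (by norm_num)) (by linarith) h9
      linarith
    have h11 : (δ / 4) ^ (s0 + r) ≤ W := by
      have h12 : δ / 4 ≤ W ^ (1 / (s0 + r)) := by linarith
      calc (δ / 4) ^ (s0 + r) ≤ (W ^ (1 / (s0 + r))) ^ (s0 + r) :=
            Real.rpow_le_rpow (by linarith) h12 (by linarith)
        _ = W := by
            rw [← Real.rpow_mul hW0, one_div_mul_cancel (by linarith : s0 + r ≠ 0),
              Real.rpow_one]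
    -- expand everything
    have hμ' : (μ (P a')).toReal ≤ C2 * (3 ^ s0 * δ ^ s0) / c := by
      have hC : (2 * η + 2 * δ) ^ s0 ≤ (3 * δ) ^ s0 :=
        Real.rpow_le_rpow (by linarith) (by linarith) hs0.le
      rw [Real.mul_rpow (by norm_num) hδ0] at hC
      rw [le_div_iff₀ hc0]
      calc (μ (P a')).toReal * c = c * (μ (P a')).toReal := by ring
        _ ≤ C2 * (2 * η + 2 * δ) ^ s0 := hPa'
        _ ≤ C2 * (3 ^ s0 * δ ^ s0) := by nlinarith [Real.rpow_nonneg hδ0 s0]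
    have hB : (3 * δ + 4 * η) ^ r ≤ 5 ^ r * δ ^ r := by
      have := Real.rpow_le_rpow (by linarith : (0:ℝ) ≤ 3 * δ + 4 * η)
        (by linarith : 3 * δ + 4 * η ≤ 5 * δ) hr.le
      rwa [Real.mul_rpow (by norm_num) hδ0] at this
    have hA : (δ / 4) ^ (s0 + r) = δ ^ (s0 + r) / 4 ^ (s0 + r) :=
      Real.div_rpow hδ0 (by norm_num : (0:ℝ) ≤ 4) (s0 + r)
    have hDp : (0:ℝ) < δ ^ (s0 + r) := Real.rpow_pos_of_pos hδpos _
    have hδsplit : δ ^ s0 * δ ^ r = δ ^ (s0 + r) := (Real.rpow_add hδpos s0 r).symm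
    have hnum : (3 * δ + 4 * η) ^ r * (μ (P a')).toReal
        ≤ 5 ^ r * 3 ^ s0 * C2 * δ ^ (s0 + r) / c := by
      calc (3 * δ + 4 * η) ^ r * (μ (P a')).toReal
          ≤ (5 ^ r * δ ^ r) * (C2 * (3 ^ s0 * δ ^ s0) / c) :=
            mul_le_mul hB hμ' ENNReal.toReal_nonneg (by positivity)
        _ = 5 ^ r * 3 ^ s0 * C2 * (δ ^ s0 * δ ^ r) / c := by ring
        _ = 5 ^ r * 3 ^ s0 * C2 * δ ^ (s0 + r) / c := by rw [hδsplit]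
    have hWle : W ≤ 5 ^ r * 3 ^ s0 * C2 * δ ^ (s0 + r) / ((c:ℝ) * (C1 * (3 ^ r - 1))) := by
      rw [hWdef]
      calc ((3 * δ + 4 * η) ^ r * (μ (P a')).toReal) / (C1 * (3 ^ r - 1))
          ≤ (5 ^ r * 3 ^ s0 * C2 * δ ^ (s0 + r) / c) / (C1 * (3 ^ r - 1)) := by
            exact div_le_div_of_nonneg_right hnum (mul_pos hC1 hP1).le
        _ = 5 ^ r * 3 ^ s0 * C2 * δ ^ (s0 + r) / ((c:ℝ) * (C1 * (3 ^ r - 1))) := by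
            rw [div_div, mul_comm (c:ℝ)]
    have hfrac : δ ^ (s0 + r) / 4 ^ (s0 + r)
        ≤ 5 ^ r * 3 ^ s0 * C2 * δ ^ (s0 + r) / ((c:ℝ) * (C1 * (3 ^ r - 1))) := by
      rw [← hA]
      exact le_trans h11 hWle
    rw [div_le_div_iff₀ (by positivity) (mul_pos hc0 (mul_pos hC1 hP1))] at hfrac
    have hcancel : (c:ℝ) * (C1 * (3 ^ r - 1)) ≤ 5 ^ r * 3 ^ s0 * C2 * 4 ^ (s0 + r) := by
      by_contra hlt
      push_neg at hlt
      nlinarith [hfrac, mul_lt_mul_of_pos_left hlt hDp]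
    have hcB2 : 4 ^ (s0 + r) * C2 * 3 ^ s0 * 5 ^ r < (c:ℝ) * (C1 * (3 ^ r - 1)) := by
      rw [div_mul_eq_mul_div, div_mul_eq_mul_div, div_lt_iff₀ (mul_pos hC1 hP1)] at hcB
      linarith
    linarith
  intro x hx
  exact le_trans (hδub x hx) hδ2η

end Stmt16Aux

end

/-- There exist a positive integer `c` and a constant `C3 > 0` such that for
every `k ≥ k0`, every `n` with `c·φ_k ≤ n < c·φ_{k+1}`, every `n`-optimal set `α`, every Voronoi
partition `P` and every `a ∈ α`: `I_a(α,μ) ≤ C3·m^{−k(s0+r)}`. -/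
theorem stmt16 {E : Type*} [NormedAddCommGroup E] [NormedSpace ℝ E]
    [MeasurableSpace E] [BorelSpace E] [FiniteDimensional ℝ E]
    (r : ℝ) (hr : 0 < r)
    (μ : MeasureTheory.Measure E) [MeasureTheory.IsProbabilityMeasure μ]
    (s0 ε0 C1 C2 : ℝ) (hμ : IsAhlfors μ s0 ε0 C1 C2)
    (m : ℕ) (hm : 2 ≤ m) (k0 : ℕ)
    (hk0 : 2 * ((m : ℝ) ^ k0)⁻¹ < ε0)
    (hk0min : ∀ j : ℕ, 2 * ((m : ℝ) ^ j)⁻¹ < ε0 → k0 ≤ j)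
    (φ : ℕ → ℕ)
    (hφ : ∀ k, k0 ≤ k →
      IsGreatest {j | PackingNum (msupp μ) (((m : ℝ) ^ k)⁻¹) j} (φ k)) :
    ∃ c : ℕ, ∃ C3 : ℝ, 0 < c ∧ 0 < C3 ∧
      ∀ k, k0 ≤ k → ∀ n : ℕ, c * φ k ≤ n → n < c * φ (k + 1) →
        ∀ α : Finset E, IsOptimalSet μ r n α →
          ∀ P : E → Set E, IsVoronoiPartition α P →
            ∀ a ∈ α, voronoiI μ r α P a ≤ C3 * (((m : ℝ) ^ k)⁻¹) ^ (s0 + r) := by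
  classical
  have hs0 : 0 < s0 := hμ.1
  have hε0 : 0 < ε0 := hμ.2.1
  have hC1 : 0 < C1 := hμ.2.2.1
  have hC2 : 0 < C2 := hμ.2.2.2.1
  have h31 : (1:ℝ) < 3 ^ r :=
    (Real.one_lt_rpow_iff_of_pos (by norm_num)).2 (Or.inl ⟨by norm_num, hr⟩)
  have hP1 : (0:ℝ) < 3 ^ r - 1 := by linarith
  have hm1 : (1:ℝ) ≤ (m:ℝ) := by exact_mod_cast le_trans one_le_two hm
  have hm2 : (2:ℝ) ≤ (m:ℝ) := by exact_mod_cast hm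
  obtain ⟨R, hR0, hK⟩ := Stmt16Aux.msupp_bounded hμ
  -- choice of the integer c
  set c : ℕ := max 2 (⌈4 ^ (s0 + r) * C2 / (C1 * (3 ^ r - 1)) * 3 ^ s0 * 5 ^ r⌉₊ + 1)
    with hcdef
  have hc2 : 2 ≤ c := le_max_left _ _
  have hcq : 4 ^ (s0 + r) * C2 / (C1 * (3 ^ r - 1)) * 3 ^ s0 * 5 ^ r < (c:ℝ) := by
    set q : ℝ := 4 ^ (s0 + r) * C2 / (C1 * (3 ^ r - 1)) * 3 ^ s0 * 5 ^ r
    have h1 : q ≤ (⌈q⌉₊ : ℝ) := Nat.le_ceil q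
    have h2 : (⌈q⌉₊ + 1 : ℕ) ≤ c := le_max_right _ _
    have h3 : ((⌈q⌉₊ + 1 : ℕ) : ℝ) ≤ (c:ℝ) := by exact_mod_cast h2
    push_cast at h3
    linarith
  -- choice of the threshold k1
  set ψ : ℝ := (C1 * (ε0 / 2) ^ (s0 + r)) ^ (1 / r) with hψdef
  have hψ0 : 0 < ψ := Real.rpow_pos_of_pos (by positivity) _
  obtain ⟨j, hj⟩ := pow_unbounded_of_one_lt (2 / ψ) (one_lt_two (α := ℝ))
  set k1 : ℕ := max k0 j with hk1def
  have hσk1 : ∀ k, k1 ≤ k →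
      ((2 * ((m:ℝ) ^ k)⁻¹) ^ r / C1) ^ (1 / (s0 + r)) < ε0 / 2 := by
    intro k hk
    have hmk : (0:ℝ) < (m:ℝ) ^ k := by positivity
    have hjk : (2:ℝ) ^ j ≤ (m:ℝ) ^ k :=
      le_trans (pow_le_pow_left₀ (by norm_num) hm2 j)
        (pow_le_pow_right₀ hm1 (le_trans (le_max_right k0 j) hk))
    have hsmall : 2 * ((m:ℝ) ^ k)⁻¹ < ψ := by
      have h2j : 2 / ψ < (m:ℝ) ^ k := lt_of_lt_of_le hj hjk
      rw [div_lt_iff₀ hψ0] at h2j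
      rw [← div_eq_mul_inv, div_lt_iff₀ hmk]
      linarith
    have hη0 : (0:ℝ) < 2 * ((m:ℝ) ^ k)⁻¹ := by positivity
    have hstep1 : (2 * ((m:ℝ) ^ k)⁻¹) ^ r < ψ ^ r :=
      Real.rpow_lt_rpow hη0.le hsmall hr
    have hψr : ψ ^ r = C1 * (ε0 / 2) ^ (s0 + r) := by
      rw [hψdef, ← Real.rpow_mul (by positivity), one_div_mul_cancel hr.ne',
        Real.rpow_one]
    have hstep2 : (2 * ((m:ℝ) ^ k)⁻¹) ^ r / C1 < (ε0 / 2) ^ (s0 + r) := by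
      rw [div_lt_iff₀ hC1]
      rw [hψr] at hstep1
      linarith
    have hstep3 : ((2 * ((m:ℝ) ^ k)⁻¹) ^ r / C1) ^ (1 / (s0 + r))
        < ((ε0 / 2) ^ (s0 + r)) ^ (1 / (s0 + r)) := by
      apply Real.rpow_lt_rpow (by positivity) hstep2 (by positivity)
    rwa [← Real.rpow_mul (by positivity), mul_one_div,
      div_self (by positivity : s0 + r ≠ 0), Real.rpow_one] at hstep3
  -- choice of C3
  set C3 : ℝ := max (C2 * 2 ^ (s0 + r)) (2 ^ r * ((m:ℝ) ^ k1) ^ s0) with hC3def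
  have hC30 : 0 < C3 :=
    lt_of_lt_of_le (by positivity : (0:ℝ) < C2 * 2 ^ (s0 + r)) (le_max_left _ _)
  refine ⟨c, C3, by omega, hC30, ?_⟩
  intro k hk n hn1 hn2 α hopt P hP a ha
  set η : ℝ := ((m:ℝ) ^ k)⁻¹ with hηdef
  have hη : 0 < η := by positivity
  have hφg := hφ k hk
  have hφ1 : 1 ≤ φ k := hφg.2 (Stmt16Aux.packing_one (Stmt16Aux.msupp_nonempty μ) _)
  have hφn : φ k ≤ n := le_trans (Nat.le_mul_of_pos_left _ (by omega)) hn1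
  have hint : Integrable (fun x => infDist x (α : Set E) ^ r) μ :=
    Stmt16Aux.integrable_infDist_rpow hr hK _ (Finset.mem_coe.2 ha)
  have hsplitη : η ^ (s0 + r) = η ^ s0 * η ^ r := Real.rpow_add hη _ _
  have h2ηr : (2 * η) ^ r = 2 ^ r * η ^ r := Real.mul_rpow (by norm_num) hη.le
  rcases lt_or_ge k k1 with hkk | hkk
  · -- small k : crude bound via the total error
    have htriv : voronoiI μ r α P a ≤ (2 * η) ^ r := by
      have h1 : voronoiI μ r α P a ≤ ∫ x, infDist x (α : Set E) ^ r ∂μ :=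
        setIntegral_le_integral hint
          (Filter.Eventually.of_forall fun x => Real.rpow_nonneg infDist_nonneg r)
      have h2 : (∫ x, infDist x (α : Set E) ^ r ∂μ) ≤ (2 * η) ^ r := by
        rw [hopt.2.2]
        exact Stmt16Aux.quantErrPow_le_net hr hK hη hφg hφn
      linarith
    have hbig : (1:ℝ) ≤ ((m:ℝ) ^ k1) ^ s0 * η ^ s0 := by
      have hmm : (1:ℝ) ≤ (m:ℝ) ^ k1 * η := by
        have hle : (m:ℝ) ^ k ≤ (m:ℝ) ^ k1 := pow_le_pow_right₀ hm1 hkk.le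
        have hpos : (0:ℝ) < (m:ℝ) ^ k := by positivity
        rw [hηdef]
        calc (1:ℝ) = (m:ℝ) ^ k * ((m:ℝ) ^ k)⁻¹ := (mul_inv_cancel₀ hpos.ne').symm
          _ ≤ (m:ℝ) ^ k1 * ((m:ℝ) ^ k)⁻¹ :=
            mul_le_mul_of_nonneg_right hle (by positivity)
      calc (1:ℝ) = 1 ^ s0 := (Real.one_rpow _).symm
        _ ≤ ((m:ℝ) ^ k1 * η) ^ s0 := Real.rpow_le_rpow zero_le_one hmm hs0.le
        _ = ((m:ℝ) ^ k1) ^ s0 * η ^ s0 := Real.mul_rpow (by positivity) hη.le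
    have hC3b : 2 ^ r * ((m:ℝ) ^ k1) ^ s0 ≤ C3 := le_max_right _ _
    have hfinal : (2 * η) ^ r ≤ C3 * η ^ (s0 + r) := by
      rw [h2ηr, hsplitη]
      calc (2:ℝ) ^ r * η ^ r = 2 ^ r * 1 * η ^ r := by ring
        _ ≤ 2 ^ r * (((m:ℝ) ^ k1) ^ s0 * η ^ s0) * η ^ r := by
            apply mul_le_mul_of_nonneg_right _ (Real.rpow_nonneg hη.le r)
            exact mul_le_mul_of_nonneg_left hbig (Real.rpow_nonneg (by norm_num) r)
        _ = (2 ^ r * ((m:ℝ) ^ k1) ^ s0) * (η ^ s0 * η ^ r) := by ring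
        _ ≤ C3 * (η ^ s0 * η ^ r) := by
            apply mul_le_mul_of_nonneg_right hC3b
            positivity
    linarith
  · -- large k : covering radius estimate
    have hσk := hσk1 k hkk
    have hcov := Stmt16Aux.covering_radius hμ hr hK hη hφg hc2 hcq hn1 hσk hopt hP
    have hPaK : P a ∩ msupp μ ⊆ closedBall a (2 * η) := by
      rintro x ⟨hx1, hx2⟩
      rw [mem_closedBall, hP.2.2.2.2 a ha hx1]
      exact hcov x hx2
    have hμPa : (μ (P a)).toReal ≤ C2 * (2 * η) ^ s0 :=
      Stmt16Aux.toReal_measure_le_of_subset hμ (by positivity) hPaK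
    have hIb : voronoiI μ r α P a ≤ (2 * η) ^ r * (μ (P a)).toReal := by
      have h1 : (∫ x in P a, infDist x (α : Set E) ^ r ∂μ)
          ≤ ∫ _x in P a, (2 * η) ^ r ∂μ := by
        apply integral_mono_ae hint.integrableOn
          (integrableOn_const (measure_lt_top μ _).ne)
        filter_upwards [ae_restrict_of_ae (Stmt16Aux.ae_mem_msupp μ)] with x hx
        exact Real.rpow_le_rpow infDist_nonneg (hcov x hx) hr.le
      rw [setIntegral_const, smul_eq_mul, measureReal_def] at h1
      calc voronoiI μ r α P a = ∫ x in P a, infDist x (α : Set E) ^ r ∂μ := rfl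
        _ ≤ (μ (P a)).toReal * (2 * η) ^ r := h1
        _ = (2 * η) ^ r * (μ (P a)).toReal := by ring
    have h2ηs : (2 * η) ^ s0 = 2 ^ s0 * η ^ s0 := Real.mul_rpow (by norm_num) hη.le
    have h2p : (2:ℝ) ^ (s0 + r) = 2 ^ s0 * 2 ^ r := Real.rpow_add two_pos _ _
    have hC3a : C2 * 2 ^ (s0 + r) ≤ C3 := le_max_left _ _
    calc voronoiI μ r α P a ≤ (2 * η) ^ r * (μ (P a)).toReal := hIb
      _ ≤ (2 * η) ^ r * (C2 * (2 * η) ^ s0) := by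
          apply mul_le_mul_of_nonneg_left hμPa (Real.rpow_nonneg (by positivity) r)
      _ = (C2 * 2 ^ (s0 + r)) * η ^ (s0 + r) := by
          rw [h2ηr, h2ηs, hsplitη, h2p]; ring
      _ ≤ C3 * η ^ (s0 + r) := by
          apply mul_le_mul_of_nonneg_right hC3a
          positivity
end

section
/- For every positive integer c there exists a constant C > 0, depending only on C1, C2, s0, ε0, r, q, m and c, such that for every k ≥ k0 and every n with c·φ_k ≤ n < c·φ_{k+1}: C·m^{−k(s0+r)} ≤ (1/n)·e_{n,r}(μ)^r ≤ C^{−1}·m^{−k(s0+r)}. -/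
open MeasureTheory Metric Set

section Aux

variable {E : Type*} [NormedAddCommGroup E] [NormedSpace ℝ E]
  [MeasurableSpace E] [BorelSpace E]

lemma aux_msupp_compl_null [SecondCountableTopology E] (μ : Measure E) :
    μ (msupp μ)ᶜ = 0 := by
  apply measure_null_of_locally_null
  intro x hx
  simp only [msupp, mem_compl_iff, mem_setOf_eq, not_forall] at hx
  obtain ⟨ε, hne⟩ := hx
  obtain ⟨hε, h0⟩ := hne
  refine ⟨ball x ε, mem_nhdsWithin_of_mem_nhds (ball_mem_nhds x hε), le_zero_iff.mp (not_lt.mp h0)⟩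

lemma aux_ae_msupp [SecondCountableTopology E] (μ : Measure E) :
    ∀ᵐ x ∂μ, x ∈ msupp μ := by
  rw [MeasureTheory.ae_iff]
  exact aux_msupp_compl_null μ

lemma aux_packing_cover {K : Set E} {ρ : ℝ} (hρ : 0 < ρ) {N : ℕ}
    (hg : IsGreatest {j | PackingNum K ρ j} N) :
    ∃ cs : Fin N → E, (∀ i, cs i ∈ K) ∧
      (Pairwise fun i i' => Disjoint (closedBall (cs i) ρ) (closedBall (cs i') ρ)) ∧
      ∀ x ∈ K, ∃ i, dist x (cs i) ≤ 2 * ρ := by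
  obtain ⟨⟨cs, hcK, hdisj⟩, hub⟩ := hg
  refine ⟨cs, hcK, hdisj, ?_⟩
  intro x hx
  by_contra h
  push_neg at h
  have key : ∀ i : Fin N, Disjoint (closedBall x ρ) (closedBall (cs i) ρ) := fun i =>
    closedBall_disjoint_closedBall (by have := h i; linarith)
  have hpack : PackingNum K ρ (N + 1) := by
    refine ⟨Fin.snoc cs x, ?_, ?_⟩
    · intro i
      induction i using Fin.lastCases with
      | last => simpa using hx
      | cast i => simpa using hcK i
    · intro i j hij
      induction i using Fin.lastCases with
      | last =>
        induction j using Fin.lastCases with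
        | last => exact absurd rfl hij
        | cast j => simpa using key j
      | cast i =>
        induction j using Fin.lastCases with
        | last => simpa using (key i).symm
        | cast j =>
          simp only [Fin.snoc_castSucc]
          exact hdisj (fun e => hij (congrArg Fin.castSucc e))
  have := hub hpack
  omega

end Aux

section Aux2

variable {E : Type*} [NormedAddCommGroup E] [NormedSpace ℝ E]
  [MeasurableSpace E] [BorelSpace E]

lemma aux_meas (α : Set E) {r : ℝ} (hr : 0 ≤ r) :
    Measurable fun x => infDist x α ^ r :=
  ((Real.continuous_rpow_const hr).comp (continuous_infDist_pt α)).measurable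

lemma aux_quantSet_nonneg (ν : Measure E) (r : ℝ) (n : ℕ) :
    ∀ I ∈ quantSet ν r n, (0:ℝ) ≤ I := by
  rintro I ⟨α, -, -, rfl⟩
  exact integral_nonneg fun x => Real.rpow_nonneg infDist_nonneg r

lemma aux_integral_le {μ : Measure E} [IsProbabilityMeasure μ] {α : Finset E} {r b : ℝ}
    (hr : 0 < r) (h : ∀ᵐ x ∂μ, infDist x (α : Set E) ≤ b) :
    ∫ x, infDist x (α : Set E) ^ r ∂μ ≤ b ^ r := by
  have hb : ∫ x, (b:ℝ) ^ r ∂μ = b ^ r := by simp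
  rw [← hb]
  apply integral_mono_of_nonneg
  · filter_upwards with x using Real.rpow_nonneg infDist_nonneg r
  · exact integrable_const _
  · filter_upwards [h] with x hx using Real.rpow_le_rpow infDist_nonneg hx hr.le

lemma aux_integral_ge {μ : Measure E} [IsProbabilityMeasure μ] {α : Finset E}
    (hα : α.Nonempty) {r t : ℝ} (hr : 0 < r) (ht : 0 < t)
    (hS : μ (⋃ a ∈ α, closedBall a t) ≤ ENNReal.ofReal (1/2))
    (hint : Integrable (fun x => infDist x (α : Set E) ^ r) μ) :
    t ^ r * (1/2 : ℝ) ≤ ∫ x, infDist x (α : Set E) ^ r ∂μ := by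
  set S : Set E := ⋃ a ∈ α, closedBall a t with hSdef
  have hSm : MeasurableSet S :=
    MeasurableSet.biUnion α.countable_toSet (fun a _ => measurableSet_closedBall)
  have hg : ∫ x, Sᶜ.indicator (fun _ => t ^ r) x ∂μ = (μ Sᶜ).toReal * t ^ r := by
    rw [integral_indicator_const _ hSm.compl]; simp [smul_eq_mul, Measure.real]
  have hle : ∀ x, Sᶜ.indicator (fun _ => t ^ r) x ≤ infDist x (α : Set E) ^ r := by
    intro x
    by_cases hx : x ∈ Sᶜ
    · rw [Set.indicator_of_mem hx]
      have hx' : x ∉ S := hx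
      have hd : t ≤ infDist x (α : Set E) := by
        obtain ⟨a, ha, he⟩ := (α.finite_toSet.isCompact).exists_infDist_eq_dist
          (Finset.coe_nonempty.mpr hα) x
        rw [he]
        have hmem : x ∉ closedBall a t := fun hmem => hx' (mem_biUnion ha hmem)
        rw [mem_closedBall, not_le] at hmem
        exact hmem.le
      exact Real.rpow_le_rpow ht.le hd hr.le
    · rw [Set.indicator_of_notMem hx]
      exact Real.rpow_nonneg infDist_nonneg r
  have h1 : ∫ x, Sᶜ.indicator (fun _ => t ^ r) x ∂μ ≤ ∫ x, infDist x (α:Set E) ^ r ∂μ := by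
    apply integral_mono_of_nonneg _ hint (Filter.Eventually.of_forall hle)
    filter_upwards with x
    exact Set.indicator_nonneg (fun _ _ => Real.rpow_nonneg ht.le r) x
  have hcompl : (1/2 : ℝ) ≤ (μ Sᶜ).toReal := by
    have h2 : μ S + μ Sᶜ = 1 := by rw [measure_add_measure_compl hSm, measure_univ]
    have h3 : (μ S).toReal + (μ Sᶜ).toReal = 1 := by
      rw [← ENNReal.toReal_add (measure_ne_top μ S) (measure_ne_top μ Sᶜ), h2]; simp
    have h4 : (μ S).toReal ≤ 1/2 :=
      ENNReal.toReal_le_of_le_ofReal (by norm_num) hS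
    linarith
  calc t ^ r * (1/2 : ℝ) ≤ t ^ r * (μ Sᶜ).toReal :=
        mul_le_mul_of_nonneg_left hcompl (Real.rpow_nonneg ht.le r)
    _ = (μ Sᶜ).toReal * t ^ r := mul_comm _ _
    _ = ∫ x, Sᶜ.indicator (fun _ => t ^ r) x ∂μ := hg.symm
    _ ≤ _ := h1

lemma aux_integrable {μ : Measure E} [IsProbabilityMeasure μ] [SecondCountableTopology E]
    {R : ℝ} (hK : msupp μ ⊆ closedBall 0 R)
    {α : Finset E} (hα : α.Nonempty) {r : ℝ} (hr : 0 < r) :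
    Integrable (fun x => infDist x (α : Set E) ^ r) μ := by
  obtain ⟨a0, ha0⟩ := hα
  apply Integrable.mono' (integrable_const ((R + ‖a0‖) ^ r))
    (aux_meas (α : Set E) hr.le).aestronglyMeasurable
  filter_upwards [aux_ae_msupp μ] with x hxK
  have h0 : infDist x (α : Set E) ≤ dist x a0 :=
    infDist_le_dist_of_mem (show a0 ∈ (α : Set E) from ha0)
  have hx : ‖x‖ ≤ R := by simpa [mem_closedBall, dist_zero_right] using hK hxK
  have h2 : dist x a0 ≤ ‖x‖ + ‖a0‖ := by
    rw [dist_eq_norm]; exact norm_sub_le x a0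
  rw [Real.norm_eq_abs, abs_of_nonneg (Real.rpow_nonneg infDist_nonneg r)]
  exact Real.rpow_le_rpow infDist_nonneg (by linarith) hr.le

end Aux2

set_option maxHeartbeats 1000000 in
/-- For every positive integer `c` there is `C > 0` such that for every
`k ≥ k0` and every `n` with `c·φ_k ≤ n < c·φ_{k+1}`:
`C·m^{−k(s0+r)} ≤ (1/n)·e_{n,r}(μ)^r ≤ C⁻¹·m^{−k(s0+r)}`. -/
theorem stmt19 {E : Type*} [NormedAddCommGroup E] [NormedSpace ℝ E]
    [MeasurableSpace E] [BorelSpace E] [FiniteDimensional ℝ E]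
    (r : ℝ) (hr : 0 < r)
    (μ : MeasureTheory.Measure E) [MeasureTheory.IsProbabilityMeasure μ]
    (s0 ε0 C1 C2 : ℝ) (hμ : IsAhlfors μ s0 ε0 C1 C2)
    (m : ℕ) (hm : 2 ≤ m) (k0 : ℕ)
    (hk0 : 2 * ((m : ℝ) ^ k0)⁻¹ < ε0)
    (hk0min : ∀ j : ℕ, 2 * ((m : ℝ) ^ j)⁻¹ < ε0 → k0 ≤ j)
    (φ : ℕ → ℕ)
    (hφ : ∀ k, k0 ≤ k →
      IsGreatest {j | PackingNum (msupp μ) (((m : ℝ) ^ k)⁻¹) j} (φ k)) :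
    ∀ c : ℕ, 0 < c → ∃ C : ℝ, 0 < C ∧
      ∀ k, k0 ≤ k → ∀ n : ℕ, c * φ k ≤ n → n < c * φ (k + 1) →
        C * (((m : ℝ) ^ k)⁻¹) ^ (s0 + r) ≤ (1 / (n : ℝ)) * quantErrPow μ r n ∧
        (1 / (n : ℝ)) * quantErrPow μ r n ≤ C⁻¹ * (((m : ℝ) ^ k)⁻¹) ^ (s0 + r) := by

  classical
  obtain ⟨hs0, hε0, hC1, hC2, hloc, hglob⟩ := hμ
  intro c hc
  have hm2 : (2:ℝ) ≤ (m:ℝ) := by exact_mod_cast hm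
  have hm0 : (0:ℝ) < (m:ℝ) := by linarith
  have hm1 : (1:ℝ) ≤ (m:ℝ) := by linarith
  have hρpos : ∀ k : ℕ, (0:ℝ) < ((m:ℝ) ^ k)⁻¹ := fun k => by positivity
  have hρε0 : ∀ k, k0 ≤ k → 2 * ((m:ℝ) ^ k)⁻¹ < ε0 := by
    intro k hk
    have h1 : (m:ℝ) ^ k0 ≤ (m:ℝ) ^ k := pow_le_pow_right₀ hm1 hk
    have h2 : ((m:ℝ)^k)⁻¹ ≤ ((m:ℝ)^k0)⁻¹ := inv_anti₀ (by positivity) h1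
    linarith
  have hρε0' : ∀ k, k0 ≤ k → ((m:ℝ) ^ k)⁻¹ < ε0 := by
    intro k hk
    have := hρε0 k hk; have := hρpos k; linarith
  have hKnull := aux_msupp_compl_null μ
  have hae := aux_ae_msupp μ
  have hcover : ∀ k, k0 ≤ k → ∃ cs : Fin (φ k) → E, (∀ i, cs i ∈ msupp μ) ∧
      (Pairwise fun i i' => Disjoint (closedBall (cs i) (((m:ℝ)^k)⁻¹))
        (closedBall (cs i') (((m:ℝ)^k)⁻¹))) ∧
      ∀ x ∈ msupp μ, ∃ i, dist x (cs i) ≤ 2 * ((m:ℝ)^k)⁻¹ :=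
    fun k hk => aux_packing_cover (hρpos k) (hφ k hk)
  have hφlb : ∀ k, k0 ≤ k → (1:ℝ) ≤ (φ k : ℝ) * (C2 * (2 * ((m:ℝ)^k)⁻¹) ^ s0) := by
    intro k hk
    obtain ⟨cs, hcK, hdisj, hcov⟩ := hcover k hk
    have hsub : (univ : Set E) ⊆ (⋃ i, closedBall (cs i) (2 * ((m:ℝ)^k)⁻¹)) ∪ (msupp μ)ᶜ := by
      intro x _
      by_cases hx : x ∈ msupp μ
      · obtain ⟨i, hi⟩ := hcov x hx
        exact Or.inl (mem_iUnion.mpr ⟨i, by rwa [mem_closedBall]⟩)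
      · exact Or.inr hx
    have h1 : (1:ENNReal) ≤ μ (⋃ i, closedBall (cs i) (2 * ((m:ℝ)^k)⁻¹)) := by
      have e1 : (1:ENNReal) = μ univ := measure_univ.symm
      rw [e1]
      refine le_trans (measure_mono hsub) (le_trans (measure_union_le _ _) ?_)
      rw [hKnull, add_zero]
    have h2 : μ (⋃ i, closedBall (cs i) (2 * ((m:ℝ)^k)⁻¹)) ≤
        ∑' _ : Fin (φ k), ENNReal.ofReal (C2 * (2 * ((m:ℝ)^k)⁻¹) ^ s0) :=
      le_trans (measure_iUnion_le _) (ENNReal.tsum_le_tsum fun i => hglob (cs i) _ (by positivity))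
    have h3 : (∑' _ : Fin (φ k), ENNReal.ofReal (C2 * (2 * ((m:ℝ)^k)⁻¹) ^ s0)) =
        ENNReal.ofReal ((φ k : ℝ) * (C2 * (2 * ((m:ℝ)^k)⁻¹) ^ s0)) := by
      rw [tsum_fintype, Finset.sum_const, Finset.card_univ, Fintype.card_fin, nsmul_eq_mul,
        ENNReal.ofReal_mul (Nat.cast_nonneg _), ENNReal.ofReal_natCast]
    rw [← ENNReal.one_le_ofReal, ← h3]
    exact le_trans h1 h2
  have hφub : ∀ k, k0 ≤ k → (φ k : ℝ) * (C1 * (((m:ℝ)^k)⁻¹) ^ s0) ≤ 1 := by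
    intro k hk
    obtain ⟨cs, hcK, hdisj⟩ := (hφ k hk).1
    have h1 : (∑' _ : Fin (φ k), ENNReal.ofReal (C1 * (((m:ℝ)^k)⁻¹) ^ s0)) ≤
        μ (⋃ i, closedBall (cs i) (((m:ℝ)^k)⁻¹)) := by
      rw [measure_iUnion hdisj fun i => measurableSet_closedBall]
      exact ENNReal.tsum_le_tsum fun i => (hloc (cs i) (hcK i) _ (hρpos k) (hρε0' k hk)).1
    have h3 : (∑' _ : Fin (φ k), ENNReal.ofReal (C1 * (((m:ℝ)^k)⁻¹) ^ s0)) =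
        ENNReal.ofReal ((φ k : ℝ) * (C1 * (((m:ℝ)^k)⁻¹) ^ s0)) := by
      rw [tsum_fintype, Finset.sum_const, Finset.card_univ, Fintype.card_fin, nsmul_eq_mul,
        ENNReal.ofReal_mul (Nat.cast_nonneg _), ENNReal.ofReal_natCast]
    rw [← ENNReal.ofReal_le_one, ← h3]
    exact le_trans h1 prob_le_one
  have hφ1 : ∀ k, k0 ≤ k → 1 ≤ φ k := by
    intro k hk
    by_contra h
    have h0 : φ k = 0 := by omega
    have := hφlb k hk
    rw [h0] at this
    norm_num at this
  have hKb : ∃ R, msupp μ ⊆ closedBall 0 R := by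
    obtain ⟨cs0, -, -, hcov0⟩ := hcover k0 le_rfl
    have hb : Bornology.IsBounded (⋃ i, closedBall (cs0 i) (2 * ((m:ℝ)^k0)⁻¹)) :=
      Bornology.isBounded_iUnion.mpr fun i => isBounded_closedBall
    obtain ⟨R, hRR⟩ := hb.subset_closedBall 0
    refine ⟨R, fun x hx => hRR ?_⟩
    obtain ⟨i, hi⟩ := hcov0 x hx
    exact mem_iUnion.mpr ⟨i, by rwa [mem_closedBall]⟩
  obtain ⟨R, hR⟩ := hKb
  have hcR : (0:ℝ) < c := by exact_mod_cast hc
  have hMs : (0:ℝ) < (m:ℝ) ^ s0 := Real.rpow_pos_of_pos hm0 _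
  set Nc : ℝ := c * (m:ℝ) ^ s0 / C1 with hNcdef
  have hNc : 0 < Nc := div_pos (mul_pos hcR hMs) hC1
  set δ : ℝ := (1 / (2 * Nc * C2)) ^ (1/s0) with hδdef
  have hδ : 0 < δ := Real.rpow_pos_of_pos (by positivity) _
  have hδs0 : δ ^ s0 = 1 / (2 * Nc * C2) := by
    rw [hδdef, ← Real.rpow_mul (by positivity), one_div s0, inv_mul_cancel₀ hs0.ne',
      Real.rpow_one]
  set Cup : ℝ := (2:ℝ) ^ r * (C2 * (2:ℝ) ^ s0) with hCupdef
  have h2r : (0:ℝ) < (2:ℝ) ^ r := Real.rpow_pos_of_pos two_pos r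
  have h2s : (0:ℝ) < (2:ℝ) ^ s0 := Real.rpow_pos_of_pos two_pos s0
  have hCup : 0 < Cup := by positivity
  have hδr : (0:ℝ) < δ ^ r := Real.rpow_pos_of_pos hδ r
  set Clow : ℝ := δ ^ r / (2 * Nc) with hClowdef
  have hClow : 0 < Clow := div_pos hδr (by linarith)
  refine ⟨min Clow Cup⁻¹, lt_min hClow (by positivity), ?_⟩
  intro k hk n hn1 hn2
  set ρ : ℝ := ((m:ℝ) ^ k)⁻¹ with hρk
  have hρ : 0 < ρ := hρpos k
  have hφk1 := hφ1 k hk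
  have hn0 : 1 ≤ n := le_trans (le_trans (by omega : 1 ≤ φ k) (Nat.le_mul_of_pos_left _ hc)) hn1
  have hnR : (0:ℝ) < (n:ℝ) := by exact_mod_cast hn0
  obtain ⟨cs, hcK, -, hcov⟩ := hcover k hk
  haveI : Nonempty (Fin (φ k)) := ⟨⟨0, by omega⟩⟩
  set α : Finset E := Finset.image cs Finset.univ with hαdef
  have hαne : α.Nonempty := Finset.Nonempty.image Finset.univ_nonempty cs
  have hαcard : α.card ≤ n := by
    have hc1 : α.card ≤ φ k := le_trans Finset.card_image_le (by simp)
    exact le_trans (le_trans hc1 (Nat.le_mul_of_pos_left _ hc)) hn1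
  have hbdd : BddBelow (quantSet μ r n) := ⟨0, fun I hI => aux_quantSet_nonneg μ r n I hI⟩
  have hmem : (∫ x, infDist x (α:Set E) ^ r ∂μ) ∈ quantSet μ r n := ⟨α, hαne, hαcard, rfl⟩
  have heub : quantErrPow μ r n ≤ (2 * ρ) ^ r := by
    refine le_trans (csInf_le hbdd hmem) ?_
    apply aux_integral_le hr
    filter_upwards [hae] with x hx
    obtain ⟨i, hi⟩ := hcov x hx
    refine le_trans (infDist_le_dist_of_mem ?_) hi
    simp [hαdef]
  have hQpos : (0:ℝ) < (((m:ℝ)^(k+1))⁻¹) ^ s0 := Real.rpow_pos_of_pos (hρpos (k+1)) _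
  have hnρ : (n:ℝ) * ρ ^ s0 ≤ Nc := by
    have h1 : (n:ℝ) ≤ (c:ℝ) * (φ (k+1) : ℝ) := by exact_mod_cast hn2.le
    have h2 := hφub (k+1) (by omega)
    have h4 : ρ ^ s0 = (((m:ℝ)^(k+1))⁻¹) ^ s0 * (m:ℝ) ^ s0 := by
      have e1 : ((m:ℝ)^(k+1))⁻¹ = ρ * (m:ℝ)⁻¹ := by
        rw [hρk, pow_succ, mul_inv]
      rw [e1, Real.mul_rpow hρ.le (by positivity), Real.inv_rpow hm0.le]
      field_simp
    set Q := (((m:ℝ)^(k+1))⁻¹) ^ s0 with hQdef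
    have h5 : (n:ℝ) * Q ≤ ((c:ℝ) * (φ (k+1):ℝ)) * Q := mul_le_mul_of_nonneg_right h1 hQpos.le
    have h6 : (φ (k+1):ℝ) * Q ≤ 1/C1 := by
      rw [le_div_iff₀ hC1]
      calc (φ (k+1):ℝ) * Q * C1 = (φ (k+1):ℝ) * (C1 * Q) := by ring
        _ ≤ 1 := h2
    rw [h4]
    calc (n:ℝ) * (Q * (m:ℝ)^s0) = ((n:ℝ) * Q) * (m:ℝ)^s0 := by ring
      _ ≤ ((c:ℝ) * (1/C1)) * (m:ℝ)^s0 := by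
          refine mul_le_mul_of_nonneg_right (le_trans h5 ?_) hMs.le
          rw [mul_assoc]
          exact mul_le_mul_of_nonneg_left h6 hcR.le
      _ = Nc := by rw [hNcdef]; ring
  have helb : (δ * ρ) ^ r * (1/2:ℝ) ≤ quantErrPow μ r n := by
    apply le_csInf ⟨_, hmem⟩
    rintro I ⟨β, hβne, hβcard, rfl⟩
    refine aux_integral_ge hβne hr (by positivity) ?_ (aux_integrable hR hβne hr)
    calc μ (⋃ a ∈ β, closedBall a (δ * ρ))
        ≤ ∑ a ∈ β, μ (closedBall a (δ * ρ)) := measure_biUnion_finset_le _ _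
      _ ≤ ∑ _a ∈ β, ENNReal.ofReal (C2 * (δ * ρ) ^ s0) :=
          Finset.sum_le_sum fun a _ => hglob a _ (by positivity)
      _ = (β.card : ENNReal) * ENNReal.ofReal (C2 * (δ * ρ) ^ s0) := by
          rw [Finset.sum_const, nsmul_eq_mul]
      _ ≤ (n : ENNReal) * ENNReal.ofReal (C2 * (δ * ρ) ^ s0) :=
          mul_le_mul_left (by exact_mod_cast Nat.cast_le.mpr hβcard) _
      _ = ENNReal.ofReal ((n:ℝ) * (C2 * (δ * ρ) ^ s0)) := by
          rw [ENNReal.ofReal_mul (Nat.cast_nonneg n), ENNReal.ofReal_natCast]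
      _ ≤ ENNReal.ofReal (1/2) := by
          apply ENNReal.ofReal_le_ofReal
          have hts0 : (δ * ρ) ^ s0 = δ ^ s0 * ρ ^ s0 := Real.mul_rpow hδ.le hρ.le
          rw [hts0, hδs0]
          have he : (n:ℝ) * (C2 * (1/(2*Nc*C2) * ρ^s0)) = ((n:ℝ) * ρ^s0) / (2 * Nc) := by
            field_simp
          rw [he, div_le_iff₀ (by linarith : (0:ℝ) < 2 * Nc)]
          nlinarith
  have hsplit : ρ ^ (s0 + r) = ρ ^ s0 * ρ ^ r := Real.rpow_add hρ s0 r
  have hρr : (0:ℝ) < ρ ^ r := Real.rpow_pos_of_pos hρ r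
  have hρs0 : (0:ℝ) < ρ ^ s0 := Real.rpow_pos_of_pos hρ s0
  set C := min Clow Cup⁻¹ with hCdef
  have hCpos : 0 < C := lt_min hClow (by positivity)
  constructor
  · rw [show (1/(n:ℝ)) * quantErrPow μ r n = quantErrPow μ r n / n by ring, le_div_iff₀ hnR]
    have hd : (δ * ρ) ^ r = δ ^ r * ρ ^ r := Real.mul_rpow hδ.le hρ.le
    have hCle : C ≤ Clow := min_le_left _ _
    calc C * ρ ^ (s0+r) * n = (C * ((n:ℝ) * ρ^s0)) * ρ^r := by rw [hsplit]; ring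
      _ ≤ (Clow * Nc) * ρ^r := by
          refine mul_le_mul_of_nonneg_right (mul_le_mul hCle hnρ (by positivity) hClow.le) hρr.le
      _ = δ^r * ρ^r * (1/2) := by
          rw [hClowdef]
          field_simp
      _ = (δ * ρ)^r * (1/2) := by rw [hd]
      _ ≤ quantErrPow μ r n := helb
  · rw [show (1/(n:ℝ)) * quantErrPow μ r n = quantErrPow μ r n / n by ring, div_le_iff₀ hnR]
    have hCinv : Cup ≤ C⁻¹ := by
      have h := min_le_right Clow Cup⁻¹
      calc Cup = (Cup⁻¹)⁻¹ := (inv_inv _).symm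
        _ ≤ C⁻¹ := inv_anti₀ hCpos h
    have hφn : (φ k : ℝ) ≤ n := by
      exact_mod_cast le_trans (Nat.le_mul_of_pos_left _ hc) hn1
    have h1 : (1:ℝ) ≤ (n:ℝ) * (C2 * (2:ℝ)^s0 * ρ^s0) := by
      have hlb := hφlb k hk
      have h2ρ : (2 * ρ)^s0 = (2:ℝ)^s0 * ρ^s0 := Real.mul_rpow (by norm_num) hρ.le
      rw [h2ρ] at hlb
      have hX : (0:ℝ) < C2 * (2:ℝ)^s0 * ρ^s0 := by positivity
      calc (1:ℝ) ≤ (φ k:ℝ) * (C2 * ((2:ℝ)^s0 * ρ^s0)) := hlb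
        _ = (φ k:ℝ) * (C2 * (2:ℝ)^s0 * ρ^s0) := by ring
        _ ≤ (n:ℝ) * (C2 * (2:ℝ)^s0 * ρ^s0) := mul_le_mul_of_nonneg_right hφn hX.le
    have h2d : (2 * ρ)^r = (2:ℝ)^r * ρ^r := Real.mul_rpow (by norm_num) hρ.le
    calc quantErrPow μ r n ≤ (2 * ρ)^r := heub
      _ = ((2:ℝ)^r * ρ^r) * 1 := by rw [h2d]; ring
      _ ≤ ((2:ℝ)^r * ρ^r) * ((n:ℝ) * (C2 * (2:ℝ)^s0 * ρ^s0)) :=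
          mul_le_mul_of_nonneg_left h1 (by positivity)
      _ = Cup * ρ^(s0+r) * n := by rw [hsplit, hCupdef]; ring
      _ ≤ C⁻¹ * ρ^(s0+r) * n := by
          refine mul_le_mul_of_nonneg_right (mul_le_mul_of_nonneg_right hCinv ?_) hnR.le
          positivity
end
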